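/- arXiv:1112.5361 — 3 statements merged into one kernel-verified Lean document; each statement's English description precedes it below -/
import Mathlib

section
/- The operators $\bar L_k = \sum_{j\in\mathbb Z}(j-k)a_j a_{k-j}^*$ (regularized) satisfy the centerless Virasoro (Witt) relations $[\bar L_m, \bar L_n] = (m-n)\bar L_{m+n}$ for all $m,n \in \mathbb Z$. -/
/- STATEMENT 3: With `L̄_k = ∑_{j∈ℤ} (j-k) a_j a_{k-j}^*` (interpreted via the
regularized, eventually-constant finite sums), the Witt relations `[L̄_m, L̄_n] = (m-n) L̄_{m+n}` hold. -/

private lemma comm4_aux {R : Type*} [Ring R] (A B C D : R) (h1 : A * C = C * A)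
    (h2 : B * D = D * B) :
    A * B * (C * D) - C * D * (A * B)
      = A * (B * C - C * B) * D + C * (A * D - D * A) * B := by
  have e1 : A * (B * C - C * B) * D = A * B * (C * D) - A * C * (B * D) := by noncomm_ring
  have e2 : C * (A * D - D * A) * B = C * A * (D * B) - C * D * (A * B) := by noncomm_ring
  rw [e1, e2, h1, ← h2]
  abel

private lemma sum_shift_aux {V : Type*} [AddCommGroup V] (f : ℤ → V) (S T : Finset ℤ) (n : ℤ)
    (hsub : ∀ x ∈ S, x - n ∈ T) (hvan : ∀ j, j ∉ S → f j = 0) :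
    ∑ j ∈ T, f (j + n) = ∑ j ∈ S, f j := by
  have h1 : ∑ j ∈ T, f (j + n) = ∑ j ∈ T.image (fun x => x + n), f j :=
    (Finset.sum_image (by intro x _ y _ h; have h' : x + n = y + n := h; omega)).symm
  rw [h1]
  refine (Finset.sum_subset ?_ ?_).symm
  · intro x hx
    simp only [Finset.mem_image]
    exact ⟨x - n, hsub x hx, by ring⟩
  · intro x _ hx
    exact hvan x hx

theorem stmt3 (V : Type*) [AddCommGroup V] [Module ℂ V]
    (a astar : ℤ → Module.End ℂ V)
    (ha : ∀ m n : ℤ, ⁅a m, a n⁆ = 0)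
    (hastar : ∀ m n : ℤ, ⁅astar m, astar n⁆ = 0)
    (haa : ∀ m n : ℤ, ⁅a m, astar n⁆ =
      if m + n = 0 then (1 : Module.End ℂ V) else 0)
    (Lbar : ℤ → Module.End ℂ V)
    (hL : ∀ (k : ℤ) (v : V), ∃ S : Finset ℤ, ∀ T : Finset ℤ, S ⊆ T →
      Lbar k v = ∑ j ∈ T, ((j - k) • (a j * astar (k - j))) v)
    (m n : ℤ) :
    ⁅Lbar m, Lbar n⁆ = (m - n) • Lbar (m + n) := by
  classical
  -- strengthened form of hL: eventually-constant sums + single-term vanishing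
  have key : ∀ (k : ℤ) (w : V), ∃ S : Finset ℤ,
      (∀ T : Finset ℤ, S ⊆ T → Lbar k w = ∑ j ∈ T, ((j - k) • (a j * astar (k - j))) w) ∧
      (∀ j, j ∉ S → ((j - k) • (a j * astar (k - j))) w = 0) := by
    intro k w
    obtain ⟨S, hS⟩ := hL k w
    refine ⟨S, hS, fun j hj => ?_⟩
    have h1 := hS S (Finset.Subset.refl S)
    have h2 := hS (insert j S) (Finset.subset_insert _ _)
    rw [Finset.sum_insert hj, ← h1] at h2
    have h3 : ((j - k) • (a j * astar (k - j))) w + Lbar k w = Lbar k w := h2.symm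
    simpa using h3
  -- the operator bracket identity
  have hbr : ∀ j i : ℤ,
      (a j * astar (m - j)) * (a i * astar (n - i)) -
        (a i * astar (n - i)) * (a j * astar (m - j))
      = (if i = j + n then a i * astar (m - j) else 0)
        - (if i = j - m then a j * astar (n - i) else 0) := by
    intro j i
    have h1 : a j * a i = a i * a j := by
      have h := ha j i; rw [Ring.lie_def, sub_eq_zero] at h; exact h
    have h2 : astar (m - j) * astar (n - i) = astar (n - i) * astar (m - j) := by
      have h := hastar (m - j) (n - i); rw [Ring.lie_def, sub_eq_zero] at h; exact h
    rw [comm4_aux _ _ _ _ h1 h2]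
    have h3 : a j * astar (n - i) - astar (n - i) * a j
        = if i = j + n then (1 : Module.End ℂ V) else 0 := by
      rw [← Ring.lie_def, haa]
      by_cases h : i = j + n
      · rw [if_pos (by omega), if_pos h]
      · rw [if_neg (by omega), if_neg h]
    have h4 : astar (m - j) * a i - a i * astar (m - j)
        = -(if i = j - m then (1 : Module.End ℂ V) else 0) := by
      rw [show astar (m - j) * a i - a i * astar (m - j)
            = -(a i * astar (m - j) - astar (m - j) * a i) from by abel, ← Ring.lie_def, haa]
      by_cases h : i = j - m
      · rw [if_pos (by omega), if_pos h]
      · rw [if_neg (by omega), if_neg h]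
    rw [h3, h4]
    by_cases hc1 : i = j + n <;> by_cases hc2 : i = j - m <;>
      simp [hc1, hc2, mul_neg, neg_mul, mul_one, mul_zero, zero_mul] <;> abel
  ext v
  obtain ⟨S1, hS1⟩ := key n v
  obtain ⟨S2, hS2⟩ := key m v
  obtain ⟨S3, hS3⟩ := key m (Lbar n v)
  obtain ⟨S4, hS4⟩ := key n (Lbar m v)
  obtain ⟨S5, hS5⟩ := key (m + n) v
  set F : ℤ → V := fun t => (a t * astar (m + n - t)) v with hF
  have hvan : ∀ t, t ∉ S5 → (t - (m + n)) • F t = 0 := by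
    intro t ht
    have h := hS5.2 t ht
    rw [LinearMap.smul_apply] at h
    exact h
  set T : Finset ℤ := S1 ∪ S2 ∪ S3 ∪ S4 ∪ S5 ∪ S5.image (fun x => x - n) ∪
      S5.image (fun x => x - m) with hTdef
  have hT1 : S1 ⊆ T := by intro x hx; simp only [hTdef, Finset.mem_union]; tauto
  have hT2 : S2 ⊆ T := by intro x hx; simp only [hTdef, Finset.mem_union]; tauto
  have hT3 : S3 ⊆ T := by intro x hx; simp only [hTdef, Finset.mem_union]; tauto
  have hT4 : S4 ⊆ T := by intro x hx; simp only [hTdef, Finset.mem_union]; tauto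
  have hT5 : S5 ⊆ T := by intro x hx; simp only [hTdef, Finset.mem_union]; tauto
  have hTn : ∀ x ∈ S5, x - n ∈ T := by
    intro x hx
    simp only [hTdef, Finset.mem_union, Finset.mem_image]
    exact Or.inl (Or.inr ⟨x, hx, rfl⟩)
  have hTm : ∀ x ∈ S5, x - m ∈ T := by
    intro x hx
    simp only [hTdef, Finset.mem_union, Finset.mem_image]
    exact Or.inr ⟨x, hx, rfl⟩
  -- expand the double sums
  have hmw : Lbar m (Lbar n v)
      = ∑ j ∈ T, ∑ i ∈ T, ((j - m) * (i - n)) •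
          (((a j * astar (m - j)) * (a i * astar (n - i))) v) := by
    rw [hS3.1 T hT3]
    refine Finset.sum_congr rfl fun j _ => ?_
    rw [hS1.1 T hT1, map_sum]
    refine Finset.sum_congr rfl fun i _ => ?_
    simp only [LinearMap.smul_apply, Module.End.mul_apply, map_zsmul, smul_smul]
    rw [mul_comm (i - n) (j - m)]
  have hnu : Lbar n (Lbar m v)
      = ∑ j ∈ T, ∑ i ∈ T, ((j - m) * (i - n)) •
          (((a i * astar (n - i)) * (a j * astar (m - j))) v) := by
    rw [Finset.sum_comm]
    rw [hS4.1 T hT4]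
    refine Finset.sum_congr rfl fun i _ => ?_
    rw [hS2.1 T hT2, map_sum]
    refine Finset.sum_congr rfl fun j _ => ?_
    simp only [LinearMap.smul_apply, Module.End.mul_apply, map_zsmul, smul_smul]
  have hcomb : ⁅Lbar m, Lbar n⁆ v = ∑ j ∈ T, ∑ i ∈ T, ((j - m) * (i - n)) •
      ((((a j * astar (m - j)) * (a i * astar (n - i))) -
        ((a i * astar (n - i)) * (a j * astar (m - j)))) v) := by
    have hd : ⁅Lbar m, Lbar n⁆ v = Lbar m (Lbar n v) - Lbar n (Lbar m v) := by
      simp [Ring.lie_def, LinearMap.sub_apply, Module.End.mul_apply]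
    rw [hd, hmw, hnu, ← Finset.sum_sub_distrib]
    refine Finset.sum_congr rfl fun j _ => ?_
    rw [← Finset.sum_sub_distrib]
    refine Finset.sum_congr rfl fun i _ => ?_
    rw [LinearMap.sub_apply, smul_sub]
  have hstep : ⁅Lbar m, Lbar n⁆ v =
      (∑ j ∈ T, (if j + n ∈ T then
          ((j - m) * ((j + n) - n)) • ((a (j + n) * astar (m - j)) v) else 0))
        - ∑ j ∈ T, (if j - m ∈ T then
          ((j - m) * ((j - m) - n)) • ((a j * astar (n - (j - m))) v) else 0) := by
    rw [hcomb, ← Finset.sum_sub_distrib]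
    refine Finset.sum_congr rfl fun j _ => ?_
    rw [← Finset.sum_ite_eq' T (j + n)
          (fun i => ((j - m) * (i - n)) • ((a i * astar (m - j)) v)),
        ← Finset.sum_ite_eq' T (j - m)
          (fun i => ((j - m) * (i - n)) • ((a j * astar (n - i)) v)),
        ← Finset.sum_sub_distrib]
    refine Finset.sum_congr rfl fun i _ => ?_
    rw [hbr j i, LinearMap.sub_apply, smul_sub]
    congr 1
    · by_cases h : i = j + n <;> simp [h]
    · by_cases h : i = j - m <;> simp [h]
  have hconv1 : ∀ j : ℤ,
      (if j + n ∈ T then ((j - m) * ((j + n) - n)) • ((a (j + n) * astar (m - j)) v) else 0)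
      = (if j + n ∈ T then ((j - m) * ((j + n) - n)) • F (j + n) else 0) := by
    intro j
    by_cases h : j + n ∈ T
    · simp only [if_pos h, hF]
      rw [show m + n - (j + n) = m - j from by ring]
    · simp only [if_neg h]
  have hconv2 : ∀ j : ℤ,
      (if j - m ∈ T then ((j - m) * ((j - m) - n)) • ((a j * astar (n - (j - m))) v) else 0)
      = (if j - m ∈ T then ((j - m) * ((j - m) - n)) • F j else 0) := by
    intro j
    by_cases h : j - m ∈ T
    · simp only [if_pos h, hF]
      rw [show m + n - j = n - (j - m) from by ring]
    · simp only [if_neg h]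
  -- the two collapsed sums
  have hA : (∑ j ∈ T, if j + n ∈ T then ((j - m) * ((j + n) - n)) • F (j + n) else 0)
      = ∑ t ∈ S5, ((t - n - m) * (t - n)) • F t := by
    have hvf : ∀ t : ℤ, t ∉ S5 → ((t - n - m) * (t - n)) • F t = 0 := by
      intro t ht
      rw [show (t - n - m) * (t - n) = (t - n) * (t - (m + n)) from by ring, mul_smul,
        hvan t ht, smul_zero]
    have step1 : ∀ j ∈ T, (if j + n ∈ T then ((j - m) * ((j + n) - n)) • F (j + n) else 0)
        = ((j + n - n - m) * ((j + n) - n)) • F (j + n) := by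
      intro j _
      by_cases h : j + n ∈ T
      · rw [if_pos h, show (j - m) * ((j + n) - n) = (j + n - n - m) * ((j + n) - n) from by ring]
      · rw [if_neg h]
        exact (hvf (j + n) (fun hmem => h (hT5 hmem))).symm
    rw [Finset.sum_congr rfl step1]
    exact sum_shift_aux (fun t => ((t - n - m) * (t - n)) • F t) S5 T n hTn hvf
  have hB : (∑ j ∈ T, if j - m ∈ T then ((j - m) * ((j - m) - n)) • F j else 0)
      = ∑ t ∈ S5, ((t - m) * ((t - m) - n)) • F t := by
    have hvf : ∀ t : ℤ, t ∉ S5 → ((t - m) * ((t - m) - n)) • F t = 0 := by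
      intro t ht
      rw [show (t - m) * ((t - m) - n) = (t - m) * (t - (m + n)) from by ring, mul_smul,
        hvan t ht, smul_zero]
    have step1 : ∀ j ∈ T, (if j - m ∈ T then ((j - m) * ((j - m) - n)) • F j else 0)
        = ((j - m) * ((j - m) - n)) • F j := by
      intro j _
      by_cases h : j - m ∈ T
      · rw [if_pos h]
      · rw [if_neg h]
        exact (hvf j (fun hj => h (hTm j hj))).symm
    rw [Finset.sum_congr rfl step1]
    refine (Finset.sum_subset hT5 ?_).symm
    intro x _ hx
    exact hvf x hx
  have hRHS : ((m - n) • Lbar (m + n)) v = ∑ t ∈ S5, ((m - n) * (t - (m + n))) • F t := by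
    rw [LinearMap.smul_apply, hS5.1 S5 (Finset.Subset.refl _), Finset.smul_sum]
    refine Finset.sum_congr rfl fun t _ => ?_
    rw [LinearMap.smul_apply, smul_smul, hF]
  rw [hstep, Finset.sum_congr rfl (fun j _ => hconv1 j),
    Finset.sum_congr rfl (fun j _ => hconv2 j), hA, hB, hRHS, ← Finset.sum_sub_distrib]
  refine Finset.sum_congr rfl fun t _ => ?_
  rw [← sub_smul, show (t - n - m) * (t - n) - (t - m) * ((t - m) - n)
        = (m - n) * (t - (m + n)) from by ring]
end

section
/- With notation as in the imaginary Wakimoto realization, $[\rho(e(z)), L(w)] = \rho(e(w))\,\partial_w\delta(z/w) - \mu\,\partial_w^2\big(a^*(w)\,\delta(z/w)\big)$. Consequently $[L_{-1}, \rho(e(z))] = \partial_z\rho(e(z))$ and $[L_0, \rho(e(z))] = z\partial_z\rho(e(z)) + \rho(e(z))$. -/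
/- STATEMENT 12: With
`ρ(e(z)) = :a^*(z)² a(z): - a^*(z) b(z) - (1-γ²) ∂_z a^*(z)` (so that the
mode `e_n = ∑_{j,k} a_{n-j-k} a_j^* a_k^* - ∑_j a_j^* b_{n-j} + (1-γ²) n a_n^*`,
regularized) and `L(w) = a(w)∂_w a^*(w) + ½:b(w)²: + μ ∂_w b(w)`, one has the
coefficient form of
`[ρ(e(z)), L(w)] = ρ(e(w)) ∂_wδ(z/w) - μ ∂_w²(a^*(w) δ(z/w))`:
`[e_m, L_n] = m e_{m+n} - μ n (n+1) a_{m+n}^*`; consequently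
`[L_{-1}, e_m] = -m e_{m-1}` and `[L_0, e_m] = -m e_m`
(the coefficient forms of `[L_{-1},ρ(e(z))] = ∂_zρ(e(z))` and
`[L_0,ρ(e(z))] = z∂_zρ(e(z)) + ρ(e(z))`). -/

theorem stmt12 (V : Type*) [AddCommGroup V] [Module ℂ V]
    (a astar b L eOp : ℤ → Module.End ℂ V) (μ γ : ℂ)
    (haa : ∀ m n : ℤ, ⁅a m, astar n⁆ =
      if m + n = 0 then (1 : Module.End ℂ V) else 0)
    (ha : ∀ m n : ℤ, ⁅a m, a n⁆ = 0)
    (hst : ∀ m n : ℤ, ⁅astar m, astar n⁆ = 0)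
    (hab : ∀ m n : ℤ, ⁅a m, b n⁆ = 0)
    (hsb : ∀ m n : ℤ, ⁅astar m, b n⁆ = 0)
    (hbb : ∀ m n : ℤ, ⁅b m, b n⁆ =
      if m + n = 0 then ((2 : ℂ) * (m : ℂ)) • (1 : Module.End ℂ V) else 0)
    (hL : ∀ (k : ℤ) (v : V), ∃ S₁ S₂ : Finset ℤ, ∀ T₁ T₂ : Finset ℤ,
      S₁ ⊆ T₁ → S₂ ⊆ T₂ →
      L k v = (∑ j ∈ T₁, ((j - k) • (a j * astar (k - j))) v)
        + (1/4 : ℂ) • (∑ j ∈ T₂,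
            (if j < 0 then b j * b (k - j) else b (k - j) * b j) v)
        - ((μ/2) * ((k : ℂ) + 1)) • b k v)
    (he : ∀ (n : ℤ) (v : V), ∃ (S₁ : Finset (ℤ × ℤ)) (S₂ : Finset ℤ),
      ∀ (T₁ : Finset (ℤ × ℤ)) (T₂ : Finset ℤ), S₁ ⊆ T₁ → S₂ ⊆ T₂ →
      eOp n v = (∑ p ∈ T₁, (a (n - p.1 - p.2) * astar p.1 * astar p.2) v)
        - (∑ j ∈ T₂, (astar j * b (n - j)) v)
        + ((1 - γ ^ 2) * (n : ℂ)) • astar n v)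
    (m n : ℤ) :
    ⁅eOp m, L n⁆ = m • eOp (m + n) - (μ * (n : ℂ) * ((n : ℂ) + 1)) • astar (m + n) ∧
    ⁅L (-1), eOp m⁆ = (-m) • eOp (m - 1) ∧
    ⁅L 0, eOp m⁆ = (-m) • eOp m := by
  classical
  -- ## basic operator swap identities
  have lie_swap : ∀ x y : Module.End ℂ V, x * y = ⁅x, y⁆ + y * x := by
    intro x y; rw [Ring.lie_def, sub_add_cancel]
  have sw_aa : ∀ p q, a p * a q = a q * a p := by
    intro p q; rw [lie_swap, ha, zero_add]
  have sw_ss : ∀ p q, astar p * astar q = astar q * astar p := by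
    intro p q; rw [lie_swap, hst, zero_add]
  have sw_ab : ∀ p q, a p * b q = b q * a p := by
    intro p q; rw [lie_swap, hab, zero_add]
  have sw_sb : ∀ p q, astar p * b q = b q * astar p := by
    intro p q; rw [lie_swap, hsb, zero_add]
  have sw_as : ∀ p q, a p * astar q = astar q * a p + (if p + q = 0 then 1 else 0) := by
    intro p q; rw [lie_swap, haa, add_comm]
  have sw_bb : ∀ p q, b p * b q = b q * b p
      + (if p + q = 0 then ((2:ℂ)*(p:ℂ)) • (1 : Module.End ℂ V) else 0) := by
    intro p q; rw [lie_swap, hbb, add_comm]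
  -- ## pointwise swap identities
  have paa : ∀ (p q : ℤ) (v : V), a p (a q v) = a q (a p v) := by
    intro p q v; simpa [Module.End.mul_apply] using LinearMap.congr_fun (sw_aa p q) v
  have pss : ∀ (p q : ℤ) (v : V), astar p (astar q v) = astar q (astar p v) := by
    intro p q v; simpa [Module.End.mul_apply] using LinearMap.congr_fun (sw_ss p q) v
  have pab : ∀ (p q : ℤ) (v : V), a p (b q v) = b q (a p v) := by
    intro p q v; simpa [Module.End.mul_apply] using LinearMap.congr_fun (sw_ab p q) v
  have psb : ∀ (p q : ℤ) (v : V), astar p (b q v) = b q (astar p v) := by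
    intro p q v; simpa [Module.End.mul_apply] using LinearMap.congr_fun (sw_sb p q) v
  have pba : ∀ (p q : ℤ) (v : V), b p (a q v) = a q (b p v) := fun p q v => (pab q p v).symm
  have pbs : ∀ (p q : ℤ) (v : V), b p (astar q v) = astar q (b p v) := fun p q v => (psb q p v).symm
  have pas : ∀ (p q : ℤ) (v : V), a p (astar q v)
      = astar q (a p v) + (if p + q = 0 then v else 0) := by
    intro p q v
    have := LinearMap.congr_fun (sw_as p q) v
    simp only [Module.End.mul_apply, LinearMap.add_apply] at this
    rw [this]
    congr 1
    split <;> simp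
  have psa : ∀ (p q : ℤ) (v : V), astar q (a p v)
      = a p (astar q v) - (if p + q = 0 then v else 0) := by
    intro p q v; rw [pas p q v]; abel
  have pbb : ∀ (p q : ℤ) (v : V), b p (b q v)
      = b q (b p v) + (if p + q = 0 then ((2:ℂ)*(p:ℂ)) • v else 0) := by
    intro p q v
    have := LinearMap.congr_fun (sw_bb p q) v
    simp only [Module.End.mul_apply, LinearMap.add_apply] at this
    rw [this]
    congr 1
    split <;> simp
  -- ## applying an endomorphism to a finsum
  have endfin : ∀ {ι : Type} (T : Module.End ℂ V) (f : ι → V),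
      (Function.support f).Finite → T (∑ᶠ i, f i) = ∑ᶠ i, T (f i) := by
    intro ι T f hf
    exact AddMonoidHom.map_finsum T.toAddMonoidHom hf
  -- ## extraction : finsum form of hL
  have Lexp : ∀ (k : ℤ) (v : V),
      (Function.support fun j => ((j - k) • (a j * astar (k - j))) v).Finite ∧
      (Function.support fun j => (if j < 0 then b j * b (k - j) else b (k - j) * b j) v).Finite ∧
      L k v = (∑ᶠ j, ((j - k) • (a j * astar (k - j))) v)
        + (1/4 : ℂ) • (∑ᶠ j, (if j < 0 then b j * b (k - j) else b (k - j) * b j) v)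
        - ((μ/2) * ((k : ℂ) + 1)) • b k v := by
    intro k v
    obtain ⟨S₁, S₂, h⟩ := hL k v
    have h0 := h S₁ S₂ (Finset.Subset.refl _) (Finset.Subset.refl _)
    have hf1 : ∀ j ∉ S₁, ((j - k) • (a j * astar (k - j))) v = 0 := by
      intro j hj
      have h1 := h (insert j S₁) S₂ (Finset.subset_insert _ _) (Finset.Subset.refl _)
      rw [Finset.sum_insert hj] at h1
      set x := ((j - k) • (a j * astar (k - j))) v with hx
      set A := ∑ i ∈ S₁, ((i - k) • (a i * astar (k - i))) v with hA
      set B := (1/4 : ℂ) • ∑ i ∈ S₂, (if i < 0 then b i * b (k - i) else b (k - i) * b i) v with hB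
      set C := ((μ/2) * ((k : ℂ) + 1)) • b k v with hC
      have h2 : x = (x + A + B - C) - (A + B - C) := by abel
      rw [← h1, ← h0, sub_self] at h2
      exact h2
    have hf2 : ∀ j ∉ S₂, (if j < 0 then b j * b (k - j) else b (k - j) * b j) v = 0 := by
      intro j hj
      have h1 := h S₁ (insert j S₂) (Finset.Subset.refl _) (Finset.subset_insert _ _)
      rw [Finset.sum_insert hj] at h1
      set x := (if j < 0 then b j * b (k - j) else b (k - j) * b j) v with hx
      set A := ∑ i ∈ S₁, ((i - k) • (a i * astar (k - i))) v with hA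
      set B := ∑ i ∈ S₂, (if i < 0 then b i * b (k - i) else b (k - i) * b i) v with hB
      set C := ((μ/2) * ((k : ℂ) + 1)) • b k v with hC
      have h2 : (1/4 : ℂ) • x = (A + (1/4 : ℂ) • (x + B) - C) - (A + (1/4 : ℂ) • B - C) := by
        rw [smul_add]; abel
      rw [← h1, ← h0, sub_self] at h2
      have h3 : x = (4 : ℂ) • ((1/4 : ℂ) • x) := by
        rw [smul_smul]; norm_num
      rw [h3, h2, smul_zero]
    have hs1 : (Function.support fun j => ((j - k) • (a j * astar (k - j))) v) ⊆ ↑S₁ :=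
      Function.support_subset_iff'.mpr hf1
    have hs2 : (Function.support fun j =>
        (if j < 0 then b j * b (k - j) else b (k - j) * b j) v) ⊆ ↑S₂ :=
      Function.support_subset_iff'.mpr hf2
    refine ⟨S₁.finite_toSet.subset hs1, S₂.finite_toSet.subset hs2, ?_⟩
    rw [finsum_eq_finset_sum_of_support_subset _ hs1, finsum_eq_finset_sum_of_support_subset _ hs2]
    exact h0
  -- ## extraction : finsum form of he
  have eexp : ∀ (N : ℤ) (v : V),
      (Function.support fun p : ℤ × ℤ => (a (N - p.1 - p.2) * astar p.1 * astar p.2) v).Finite ∧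
      (Function.support fun j => (astar j * b (N - j)) v).Finite ∧
      eOp N v = (∑ᶠ p : ℤ × ℤ, (a (N - p.1 - p.2) * astar p.1 * astar p.2) v)
        - (∑ᶠ j, (astar j * b (N - j)) v) + ((1 - γ ^ 2) * (N : ℂ)) • astar N v := by
    intro N v
    obtain ⟨S₁, S₂, h⟩ := he N v
    have h0 := h S₁ S₂ (Finset.Subset.refl _) (Finset.Subset.refl _)
    have hf1 : ∀ p ∉ S₁, (a (N - p.1 - p.2) * astar p.1 * astar p.2) v = 0 := by
      intro p hp
      have h1 := h (insert p S₁) S₂ (Finset.subset_insert _ _) (Finset.Subset.refl _)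
      rw [Finset.sum_insert hp] at h1
      set x := (a (N - p.1 - p.2) * astar p.1 * astar p.2) v with hx
      set A := ∑ q ∈ S₁, (a (N - q.1 - q.2) * astar q.1 * astar q.2) v with hA
      set B := ∑ i ∈ S₂, (astar i * b (N - i)) v with hB
      set C := ((1 - γ ^ 2) * (N : ℂ)) • astar N v with hC
      have h2 : x = (x + A - B + C) - (A - B + C) := by abel
      rw [← h1, ← h0, sub_self] at h2
      exact h2
    have hf2 : ∀ j ∉ S₂, (astar j * b (N - j)) v = 0 := by
      intro j hj
      have h1 := h S₁ (insert j S₂) (Finset.Subset.refl _) (Finset.subset_insert _ _)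
      rw [Finset.sum_insert hj] at h1
      set x := (astar j * b (N - j)) v with hx
      set A := ∑ q ∈ S₁, (a (N - q.1 - q.2) * astar q.1 * astar q.2) v with hA
      set B := ∑ i ∈ S₂, (astar i * b (N - i)) v with hB
      set C := ((1 - γ ^ 2) * (N : ℂ)) • astar N v with hC
      have h2 : x = (A - B + C) - (A - (x + B) + C) := by abel
      rw [← h1, ← h0, sub_self] at h2
      exact h2
    have hs1 : (Function.support fun p : ℤ × ℤ =>
        (a (N - p.1 - p.2) * astar p.1 * astar p.2) v) ⊆ ↑S₁ :=
      Function.support_subset_iff'.mpr hf1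
    have hs2 : (Function.support fun j => (astar j * b (N - j)) v) ⊆ ↑S₂ :=
      Function.support_subset_iff'.mpr hf2
    refine ⟨S₁.finite_toSet.subset hs1, S₂.finite_toSet.subset hs2, ?_⟩
    rw [finsum_eq_finset_sum_of_support_subset _ hs1, finsum_eq_finset_sum_of_support_subset _ hs2]
    exact h0
  -- ## commutators with L, pointwise
  have comm_sL : ∀ (p k : ℤ) (v : V),
      astar p (L k v) = L k (astar p v) + (p + k) • astar (p + k) v := by
    intro p k v
    obtain ⟨hA, hB, hexp⟩ := Lexp k v
    obtain ⟨hA', hB', hexp'⟩ := Lexp k (astar p v)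
    have t1 : ∀ j : ℤ, astar p (((j - k) • (a j * astar (k - j))) v)
        = ((j - k) • (a j * astar (k - j))) (astar p v)
          + (if j = -p then (p + k) • astar (p + k) v else 0) := by
      intro j
      simp only [LinearMap.smul_apply, Module.End.mul_apply, map_zsmul]
      rw [psa j p (astar (k - j) v), pss p (k - j) v, smul_sub, sub_eq_add_neg]
      congr 1
      by_cases hj : j = -p
      · subst hj
        rw [if_pos (by ring), if_pos rfl]
        have e1 : k - -p = p + k := by ring
        rw [e1, show (-p - k : ℤ) = -(p + k) from by ring, neg_smul, neg_neg]
      · rw [if_neg (fun hc => hj (by omega)), if_neg hj, smul_zero, neg_zero]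
    have t2 : ∀ j : ℤ, astar p ((if j < 0 then b j * b (k - j) else b (k - j) * b j) v)
        = (if j < 0 then b j * b (k - j) else b (k - j) * b j) (astar p v) := by
      intro j
      by_cases hj : j < 0 <;> simp [hj, Module.End.mul_apply, psb]
    have hδ : (Function.support fun j : ℤ =>
        if j = -p then (p + k) • astar (p + k) v else 0) ⊆ ({-p} : Set ℤ) :=
      Function.support_subset_iff'.mpr fun j hj => if_neg (by simpa using hj)
    calc astar p (L k v)
        = astar p (∑ᶠ j, ((j - k) • (a j * astar (k - j))) v)
          + (1/4 : ℂ) • astar p (∑ᶠ j, (if j < 0 then b j * b (k - j) else b (k - j) * b j) v)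
          - ((μ/2) * ((k : ℂ) + 1)) • astar p (b k v) := by
          rw [hexp, map_sub, map_add, map_smul, map_smul]
      _ = (∑ᶠ j, (((j - k) • (a j * astar (k - j))) (astar p v)
              + (if j = -p then (p + k) • astar (p + k) v else 0)))
          + (1/4 : ℂ) • (∑ᶠ j, (if j < 0 then b j * b (k - j) else b (k - j) * b j) (astar p v))
          - ((μ/2) * ((k : ℂ) + 1)) • b k (astar p v) := by
          rw [endfin _ _ hA, endfin _ _ hB, psb, finsum_congr t1, finsum_congr t2]
      _ = ((∑ᶠ j, ((j - k) • (a j * astar (k - j))) (astar p v))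
              + ∑ᶠ j, (if j = -p then (p + k) • astar (p + k) v else 0))
          + (1/4 : ℂ) • (∑ᶠ j, (if j < 0 then b j * b (k - j) else b (k - j) * b j) (astar p v))
          - ((μ/2) * ((k : ℂ) + 1)) • b k (astar p v) := by
          rw [finsum_add_distrib hA' ((Set.finite_singleton (-p)).subset hδ)]
      _ = L k (astar p v) + (p + k) • astar (p + k) v := by
          rw [hexp', finsum_eq_single _ (-p) (fun x hx => if_neg hx), if_pos rfl]; abel
  have comm_aL : ∀ (p k : ℤ) (v : V),
      a p (L k v) = L k (a p v) + p • a (p + k) v := by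
    intro p k v
    obtain ⟨hA, hB, hexp⟩ := Lexp k v
    obtain ⟨hA', hB', hexp'⟩ := Lexp k (a p v)
    have t1 : ∀ j : ℤ, a p (((j - k) • (a j * astar (k - j))) v)
        = ((j - k) • (a j * astar (k - j))) (a p v)
          + (if j = p + k then p • a (p + k) v else 0) := by
      intro j
      simp only [LinearMap.smul_apply, Module.End.mul_apply, map_zsmul]
      rw [paa p j (astar (k - j) v), pas p (k - j) v, map_add, apply_ite (a j), map_zero,
        smul_add]
      congr 1
      by_cases hj : j = p + k
      · subst hj
        rw [if_pos (by ring), if_pos rfl, show (p + k - k : ℤ) = p from by ring]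
      · rw [if_neg (fun hc => hj (by omega)), if_neg hj, smul_zero]
    have t2 : ∀ j : ℤ, a p ((if j < 0 then b j * b (k - j) else b (k - j) * b j) v)
        = (if j < 0 then b j * b (k - j) else b (k - j) * b j) (a p v) := by
      intro j
      by_cases hj : j < 0 <;> simp [hj, Module.End.mul_apply, pab]
    have hδ : (Function.support fun j : ℤ =>
        if j = p + k then p • a (p + k) v else 0) ⊆ ({p + k} : Set ℤ) :=
      Function.support_subset_iff'.mpr fun j hj => if_neg (by simpa using hj)
    calc a p (L k v)
        = a p (∑ᶠ j, ((j - k) • (a j * astar (k - j))) v)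
          + (1/4 : ℂ) • a p (∑ᶠ j, (if j < 0 then b j * b (k - j) else b (k - j) * b j) v)
          - ((μ/2) * ((k : ℂ) + 1)) • a p (b k v) := by
          rw [hexp, map_sub, map_add, map_smul, map_smul]
      _ = (∑ᶠ j, (((j - k) • (a j * astar (k - j))) (a p v)
              + (if j = p + k then p • a (p + k) v else 0)))
          + (1/4 : ℂ) • (∑ᶠ j, (if j < 0 then b j * b (k - j) else b (k - j) * b j) (a p v))
          - ((μ/2) * ((k : ℂ) + 1)) • b k (a p v) := by
          rw [endfin _ _ hA, endfin _ _ hB, pab, finsum_congr t1, finsum_congr t2]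
      _ = ((∑ᶠ j, ((j - k) • (a j * astar (k - j))) (a p v))
              + ∑ᶠ j, (if j = p + k then p • a (p + k) v else 0))
          + (1/4 : ℂ) • (∑ᶠ j, (if j < 0 then b j * b (k - j) else b (k - j) * b j) (a p v))
          - ((μ/2) * ((k : ℂ) + 1)) • b k (a p v) := by
          rw [finsum_add_distrib hA' ((Set.finite_singleton (p + k)).subset hδ)]
      _ = L k (a p v) + p • a (p + k) v := by
          rw [hexp', finsum_eq_single _ (p + k) (fun x hx => if_neg hx), if_pos rfl]; abel
  have suppadd : ∀ {ι : Type} (f g : ι → V),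
      (Function.support fun i => f i + g i) ⊆ Function.support f ∪ Function.support g := by
    intro ι f g i hi
    by_contra hc
    simp only [Set.mem_union, Function.mem_support, not_or, not_not] at hc
    exact hi (by simp [hc.1, hc.2])
  have comm_bL : ∀ (p k : ℤ) (v : V),
      b p (L k v) = L k (b p v) + (p : ℂ) • b (p + k) v
        - (if p + k = 0 then (μ * (p : ℂ) * ((k : ℂ) + 1)) • v else 0) := by
    intro p k v
    obtain ⟨hA, hB, hexp⟩ := Lexp k v
    obtain ⟨hA', hB', hexp'⟩ := Lexp k (b p v)
    have t1 : ∀ j : ℤ, b p (((j - k) • (a j * astar (k - j))) v)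
        = ((j - k) • (a j * astar (k - j))) (b p v) := by
      intro j
      simp only [LinearMap.smul_apply, Module.End.mul_apply, map_zsmul]
      rw [pba p j, pbs p (k - j)]
    have t2 : ∀ j : ℤ, b p ((if j < 0 then b j * b (k - j) else b (k - j) * b j) v)
        = (if j < 0 then b j * b (k - j) else b (k - j) * b j) (b p v)
          + (if p + j = 0 then ((2:ℂ) * (p:ℂ)) • b (k - j) v else 0)
          + (if p + (k - j) = 0 then ((2:ℂ) * (p:ℂ)) • b j v else 0) := by
      intro j
      by_cases hj : j < 0
      · simp only [if_pos hj, Module.End.mul_apply]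
        rw [pbb p j, pbb p (k - j), map_add, apply_ite (b j), map_zero, map_smul]
        abel
      · simp only [if_neg hj, Module.End.mul_apply]
        rw [pbb p (k - j), pbb p j, map_add, apply_ite (b (k - j)), map_zero, map_smul]
    have hδ1 : (Function.support fun j : ℤ =>
        if p + j = 0 then ((2:ℂ) * (p:ℂ)) • b (k - j) v else 0).Finite :=
      (Set.finite_singleton (-p)).subset (Function.support_subset_iff'.mpr
        (fun j hj => if_neg (fun hc => (by simpa using hj : ¬ j = -p) (by omega))))
    have hδ2 : (Function.support fun j : ℤ =>
        if p + (k - j) = 0 then ((2:ℂ) * (p:ℂ)) • b j v else 0).Finite :=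
      (Set.finite_singleton (p + k)).subset (Function.support_subset_iff'.mpr
        (fun j hj => if_neg (fun hc => (by simpa using hj : ¬ j = p + k) (by omega))))
    calc b p (L k v)
        = b p (∑ᶠ j, ((j - k) • (a j * astar (k - j))) v)
          + (1/4 : ℂ) • b p (∑ᶠ j, (if j < 0 then b j * b (k - j) else b (k - j) * b j) v)
          - ((μ/2) * ((k : ℂ) + 1)) • b p (b k v) := by
          rw [hexp, map_sub, map_add, map_smul, map_smul]
      _ = (∑ᶠ j, ((j - k) • (a j * astar (k - j))) (b p v))
          + (1/4 : ℂ) • (∑ᶠ j, ((if j < 0 then b j * b (k - j) else b (k - j) * b j) (b p v)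
              + (if p + j = 0 then ((2:ℂ) * (p:ℂ)) • b (k - j) v else 0)
              + (if p + (k - j) = 0 then ((2:ℂ) * (p:ℂ)) • b j v else 0)))
          - ((μ/2) * ((k : ℂ) + 1)) • (b k (b p v)
              + (if p + k = 0 then ((2:ℂ) * (p:ℂ)) • v else 0)) := by
          rw [endfin _ _ hA, endfin _ _ hB, pbb p k v, finsum_congr t1, finsum_congr t2]
      _ = (∑ᶠ j, ((j - k) • (a j * astar (k - j))) (b p v))
          + (1/4 : ℂ) • ((∑ᶠ j, (if j < 0 then b j * b (k - j) else b (k - j) * b j) (b p v))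
              + (∑ᶠ j, (if p + j = 0 then ((2:ℂ) * (p:ℂ)) • b (k - j) v else 0))
              + (∑ᶠ j, (if p + (k - j) = 0 then ((2:ℂ) * (p:ℂ)) • b j v else 0)))
          - ((μ/2) * ((k : ℂ) + 1)) • (b k (b p v)
              + (if p + k = 0 then ((2:ℂ) * (p:ℂ)) • v else 0)) := by
          rw [finsum_add_distrib ((hB'.union hδ1).subset (suppadd _ _)) hδ2,
            finsum_add_distrib hB' hδ1]
      _ = L k (b p v) + (p : ℂ) • b (p + k) v
          - (if p + k = 0 then (μ * (p : ℂ) * ((k : ℂ) + 1)) • v else 0) := by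
          rw [finsum_eq_single _ (-p) (fun x hx => if_neg (fun hc => hx (by omega))),
              finsum_eq_single _ (p + k) (fun x hx => if_neg (fun hc => hx (by omega))),
              if_pos (show p + -p = 0 by ring), if_pos (show p + (k - (p + k)) = 0 by ring),
              show k - -p = p + k from by ring, hexp']
          by_cases hpk : p + k = 0
          · rw [if_pos hpk, if_pos hpk]; module
          · rw [if_neg hpk, if_neg hpk, add_zero, sub_zero]; module
  have commA : ∀ (x y z k : ℤ) (v : V),
      (a x * astar y * astar z) (L k v)
        = L k ((a x * astar y * astar z) v)
          + x • (a (x + k) * astar y * astar z) v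
          + (y + k) • (a x * astar (y + k) * astar z) v
          + (z + k) • (a x * astar y * astar (z + k)) v := by
    intro x y z k v
    simp only [Module.End.mul_apply]
    rw [comm_sL z k v]
    simp only [map_add, map_zsmul]
    rw [comm_sL y k (astar z v)]
    simp only [map_add, map_zsmul]
    rw [comm_aL x k (astar y (astar z v))]
  have commB : ∀ (y x k : ℤ) (v : V),
      (astar y * b x) (L k v)
        = L k ((astar y * b x) v)
          + (y + k) • (astar (y + k) * b x) v
          + (x : ℂ) • (astar y * b (x + k)) v
          - (if x + k = 0 then (μ * (x : ℂ) * ((k : ℂ) + 1)) • astar y v else 0) := by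
    intro y x k v
    simp only [Module.End.mul_apply]
    rw [comm_bL x k v, map_sub, map_add, map_smul, comm_sL y k (b x v),
      apply_ite (astar y), map_zero, map_smul]
  have main : ∀ M N : ℤ, ⁅eOp M, L N⁆
      = M • eOp (M + N) - (μ * (N : ℂ) * ((N : ℂ) + 1)) • astar (M + N) := by
    intro M N
    apply LinearMap.ext
    intro v
    obtain ⟨hA1, hB1, he1⟩ := eexp M (L N v)
    obtain ⟨hA2, hB2, he2⟩ := eexp M v
    obtain ⟨hA3, hB3, he3⟩ := eexp (M + N) v
    have hA2' : (Function.support fun p : ℤ × ℤ =>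
        L N ((a (M - p.1 - p.2) * astar p.1 * astar p.2) v)).Finite := by
      refine hA2.subset ?_
      intro p hp
      simp only [Function.mem_support, Ne] at hp ⊢
      intro h0; exact hp (by rw [h0, map_zero])
    have hB2' : (Function.support fun j : ℤ =>
        L N ((astar j * b (M - j)) v)).Finite := by
      refine hB2.subset ?_
      intro j hj
      simp only [Function.mem_support, Ne] at hj ⊢
      intro h0; exact hj (by rw [h0, map_zero])
    -- finiteness of the various correction supports (A part)
    have sH : (Function.support fun q : ℤ × ℤ =>
        (M - q.1 - q.2) • (a (M + N - q.1 - q.2) * astar q.1 * astar q.2) v).Finite := by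
      refine hA3.subset ?_
      intro q hq
      simp only [Function.mem_support, Ne] at hq ⊢
      intro h0; exact hq (by rw [h0, smul_zero])
    have sX : (Function.support fun q : ℤ × ℤ =>
        q.1 • (a (M + N - q.1 - q.2) * astar q.1 * astar q.2) v).Finite := by
      refine hA3.subset ?_
      intro q hq
      simp only [Function.mem_support, Ne] at hq ⊢
      intro h0; exact hq (by rw [h0, smul_zero])
    have sY : (Function.support fun q : ℤ × ℤ =>
        q.2 • (a (M + N - q.1 - q.2) * astar q.1 * astar q.2) v).Finite := by
      refine hA3.subset ?_
      intro q hq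
      simp only [Function.mem_support, Ne] at hq ⊢
      intro h0; exact hq (by rw [h0, smul_zero])
    have s2 : (Function.support fun p : ℤ × ℤ =>
        (p.1 + N) • (a (M + N - (p.1 + N) - p.2) * astar (p.1 + N) * astar p.2) v).Finite := by
      have hs : (Function.support fun p : ℤ × ℤ =>
          (p.1 + N) • (a (M + N - (p.1 + N) - p.2) * astar (p.1 + N) * astar p.2) v)
          ⊆ (fun p : ℤ × ℤ => (p.1 + N, p.2)) ⁻¹' (Function.support fun q : ℤ × ℤ =>
            q.1 • (a (M + N - q.1 - q.2) * astar q.1 * astar q.2) v) := fun p hp => hp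
      refine (sX.preimage ?_).subset hs
      intro p _ q _ h
      have h1 := congrArg Prod.fst h
      have h2 := congrArg Prod.snd h
      simp only [add_left_inj] at h1 h2
      exact Prod.ext h1 h2
    have s3 : (Function.support fun p : ℤ × ℤ =>
        (p.2 + N) • (a (M + N - p.1 - (p.2 + N)) * astar p.1 * astar (p.2 + N)) v).Finite := by
      have hs : (Function.support fun p : ℤ × ℤ =>
          (p.2 + N) • (a (M + N - p.1 - (p.2 + N)) * astar p.1 * astar (p.2 + N)) v)
          ⊆ (fun p : ℤ × ℤ => (p.1, p.2 + N)) ⁻¹' (Function.support fun q : ℤ × ℤ =>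
            q.2 • (a (M + N - q.1 - q.2) * astar q.1 * astar q.2) v) := fun p hp => hp
      refine (sY.preimage ?_).subset hs
      intro p _ q _ h
      have h1 := congrArg Prod.fst h
      have h2 := congrArg Prod.snd h
      simp only [add_left_inj] at h1 h2
      exact Prod.ext h1 h2
    have eq1 : (∑ᶠ p : ℤ × ℤ, (a (M - p.1 - p.2) * astar p.1 * astar p.2) (L N v))
        = M • (∑ᶠ p : ℤ × ℤ, (a (M + N - p.1 - p.2) * astar p.1 * astar p.2) v)
          + ∑ᶠ p : ℤ × ℤ, L N ((a (M - p.1 - p.2) * astar p.1 * astar p.2) v) := by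
      have step : ∀ p : ℤ × ℤ, (a (M - p.1 - p.2) * astar p.1 * astar p.2) (L N v)
          = (L N ((a (M - p.1 - p.2) * astar p.1 * astar p.2) v)
              + (M - p.1 - p.2) • (a (M + N - p.1 - p.2) * astar p.1 * astar p.2) v)
            + ((p.1 + N) • (a (M + N - (p.1 + N) - p.2) * astar (p.1 + N) * astar p.2) v
              + (p.2 + N) • (a (M + N - p.1 - (p.2 + N)) * astar p.1 * astar (p.2 + N)) v) := by
        intro p
        rw [commA (M - p.1 - p.2) p.1 p.2 N v,
          show M - p.1 - p.2 + N = M + N - p.1 - p.2 from by ring,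
          show M + N - (p.1 + N) - p.2 = M - p.1 - p.2 from by ring,
          show M + N - p.1 - (p.2 + N) = M - p.1 - p.2 from by ring]
        abel
      have merge : (∑ᶠ q : ℤ × ℤ,
            (M - q.1 - q.2) • (a (M + N - q.1 - q.2) * astar q.1 * astar q.2) v)
          + ((∑ᶠ q : ℤ × ℤ, q.1 • (a (M + N - q.1 - q.2) * astar q.1 * astar q.2) v)
            + (∑ᶠ q : ℤ × ℤ, q.2 • (a (M + N - q.1 - q.2) * astar q.1 * astar q.2) v))
          = M • ∑ᶠ p : ℤ × ℤ, (a (M + N - p.1 - p.2) * astar p.1 * astar p.2) v := by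
        rw [← finsum_add_distrib sX sY,
          ← finsum_add_distrib sH ((sX.union sY).subset (suppadd _ _))]
        calc (∑ᶠ q : ℤ × ℤ, ((M - q.1 - q.2) • (a (M + N - q.1 - q.2) * astar q.1 * astar q.2) v
              + (q.1 • (a (M + N - q.1 - q.2) * astar q.1 * astar q.2) v
                + q.2 • (a (M + N - q.1 - q.2) * astar q.1 * astar q.2) v)))
            = ∑ᶠ q : ℤ × ℤ, M • (a (M + N - q.1 - q.2) * astar q.1 * astar q.2) v :=
              finsum_congr (fun q => by module)
          _ = M • ∑ᶠ p : ℤ × ℤ, (a (M + N - p.1 - p.2) * astar p.1 * astar p.2) v :=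
              (smul_finsum' M hA3).symm
      rw [finsum_congr step,
        finsum_add_distrib ((hA2'.union sH).subset (suppadd _ _))
          ((s2.union s3).subset (suppadd _ _)),
        finsum_add_distrib hA2' sH, finsum_add_distrib s2 s3,
        show (∑ᶠ p : ℤ × ℤ,
            (p.1 + N) • (a (M + N - (p.1 + N) - p.2) * astar (p.1 + N) * astar p.2) v)
          = ∑ᶠ q : ℤ × ℤ, q.1 • (a (M + N - q.1 - q.2) * astar q.1 * astar q.2) v from
          finsum_comp_equiv
            (⟨fun p => (p.1 + N, p.2), fun p => (p.1 - N, p.2), fun p => by simp,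
              fun p => by simp⟩ : (ℤ × ℤ) ≃ (ℤ × ℤ))
            (f := fun q : ℤ × ℤ => q.1 • (a (M + N - q.1 - q.2) * astar q.1 * astar q.2) v),
        show (∑ᶠ p : ℤ × ℤ,
            (p.2 + N) • (a (M + N - p.1 - (p.2 + N)) * astar p.1 * astar (p.2 + N)) v)
          = ∑ᶠ q : ℤ × ℤ, q.2 • (a (M + N - q.1 - q.2) * astar q.1 * astar q.2) v from
          finsum_comp_equiv
            (⟨fun p => (p.1, p.2 + N), fun p => (p.1, p.2 - N), fun p => by simp,
              fun p => by simp⟩ : (ℤ × ℤ) ≃ (ℤ × ℤ))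
            (f := fun q : ℤ × ℤ => q.2 • (a (M + N - q.1 - q.2) * astar q.1 * astar q.2) v),
        ← merge]
      abel
    -- B part
    have tH : (Function.support fun j : ℤ =>
        ((M - j : ℤ) : ℂ) • (astar j * b (M + N - j)) v).Finite := by
      refine hB3.subset ?_
      intro j hj
      simp only [Function.mem_support, Ne] at hj ⊢
      intro h0; exact hj (by rw [h0, smul_zero])
    have tX : (Function.support fun t : ℤ => t • (astar t * b (M + N - t)) v).Finite := by
      refine hB3.subset ?_
      intro j hj
      simp only [Function.mem_support, Ne] at hj ⊢
      intro h0; exact hj (by rw [h0, smul_zero])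
    have t2 : (Function.support fun j : ℤ =>
        (j + N) • (astar (j + N) * b (M + N - (j + N))) v).Finite := by
      have hs : (Function.support fun j : ℤ =>
          (j + N) • (astar (j + N) * b (M + N - (j + N))) v)
          ⊆ (fun j : ℤ => j + N) ⁻¹' (Function.support fun t : ℤ =>
            t • (astar t * b (M + N - t)) v) := fun j hj => hj
      exact (tX.preimage (fun x _ y _ h => by omega)).subset hs
    have tδ : (Function.support fun j : ℤ =>
        if j = M + N then (μ * ((M - j : ℤ) : ℂ) * ((N : ℂ) + 1)) • astar j v else 0).Finite :=
      (Set.finite_singleton (M + N)).subset (Function.support_subset_iff'.mpr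
        (fun j hj => if_neg (by simpa using hj)))
    have eq2 : (∑ᶠ j : ℤ, (astar j * b (M - j)) (L N v))
        = (M • (∑ᶠ j : ℤ, (astar j * b (M + N - j)) v)
            + (μ * (N : ℂ) * ((N : ℂ) + 1)) • astar (M + N) v)
          + ∑ᶠ j : ℤ, L N ((astar j * b (M - j)) v) := by
      have step : ∀ j : ℤ, (astar j * b (M - j)) (L N v)
          = (L N ((astar j * b (M - j)) v) + ((M - j : ℤ) : ℂ) • (astar j * b (M + N - j)) v)
            + ((j + N) • (astar (j + N) * b (M + N - (j + N))) v
              - (if j = M + N then (μ * ((M - j : ℤ) : ℂ) * ((N : ℂ) + 1)) • astar j v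
                  else 0)) := by
        intro j
        rw [commB j (M - j) N v,
          show M - j + N = M + N - j from by ring,
          show M + N - (j + N) = M - j from by ring,
          if_congr (show M + N - j = 0 ↔ j = M + N by omega) rfl rfl]
        abel
      have merge : (∑ᶠ t : ℤ, t • (astar t * b (M + N - t)) v)
          + (∑ᶠ j : ℤ, ((M - j : ℤ) : ℂ) • (astar j * b (M + N - j)) v)
          = M • ∑ᶠ j : ℤ, (astar j * b (M + N - j)) v := by
        rw [← finsum_add_distrib tX tH]
        calc (∑ᶠ j : ℤ, (j • (astar j * b (M + N - j)) v
              + ((M - j : ℤ) : ℂ) • (astar j * b (M + N - j)) v))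
            = ∑ᶠ j : ℤ, M • (astar j * b (M + N - j)) v :=
              finsum_congr (fun j => by module)
          _ = M • ∑ᶠ j : ℤ, (astar j * b (M + N - j)) v := (smul_finsum' M hB3).symm
      rw [finsum_congr step,
        finsum_add_distrib ((hB2'.union tH).subset (suppadd _ _))
          ((t2.union tδ).subset (by
            intro j hj
            by_contra hc
            simp only [Set.mem_union, Function.mem_support, not_or, not_not] at hc
            refine hj ?_
            show (j + N) • (astar (j + N) * b (M + N - (j + N))) v -
              (if j = M + N then (μ * ((M - j : ℤ) : ℂ) * ((N : ℂ) + 1)) • astar j v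
                else 0) = 0
            rw [hc.1, hc.2, sub_zero])),
        finsum_add_distrib hB2' tH, finsum_sub_distrib t2 tδ,
        show (∑ᶠ j : ℤ, (j + N) • (astar (j + N) * b (M + N - (j + N))) v)
          = ∑ᶠ t : ℤ, t • (astar t * b (M + N - t)) v from
          finsum_comp_equiv
            (⟨fun j => j + N, fun j => j - N, fun j => by simp, fun j => by simp⟩ : ℤ ≃ ℤ)
            (f := fun t : ℤ => t • (astar t * b (M + N - t)) v),
        finsum_eq_single _ (M + N) (fun x hx => if_neg hx), if_pos rfl,
        show ((M - (M + N) : ℤ) : ℂ) = -(N : ℂ) from by push_cast; ring,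
        show μ * (-(N : ℂ)) * ((N : ℂ) + 1) = -(μ * (N : ℂ) * ((N : ℂ) + 1)) from by ring,
        neg_smul, sub_neg_eq_add, ← merge]
      abel
    -- final assembly
    simp only [Ring.lie_def, LinearMap.sub_apply, Module.End.mul_apply, LinearMap.smul_apply]
    rw [he1, he2, he3, map_add, map_sub, map_smul, endfin _ _ hA2, endfin _ _ hB2,
      comm_sL M N v, eq1, eq2,
      show ((M + N : ℤ) : ℂ) = (M : ℂ) + (N : ℂ) from by push_cast; ring]
    module
  refine ⟨main m n, ?_, ?_⟩
  · rw [show ⁅L (-1), eOp m⁆ = -⁅eOp m, L (-1)⁆ by rw [Ring.lie_def, Ring.lie_def, neg_sub], main m (-1)]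
    rw [show (((-1 : ℤ) : ℂ)) = -1 from by push_cast; ring,
      show μ * (-1 : ℂ) * ((-1 : ℂ) + 1) = 0 from by ring, zero_smul, sub_zero,
      show m + (-1 : ℤ) = m - 1 from by ring, neg_smul]
  · rw [show ⁅L 0, eOp m⁆ = -⁅eOp m, L 0⁆ by rw [Ring.lie_def, Ring.lie_def, neg_sub], main m 0]
    rw [show (((0 : ℤ) : ℂ)) = 0 from by norm_num,
      show μ * (0 : ℂ) * ((0 : ℂ) + 1) = 0 from by ring, zero_smul, sub_zero,
      add_zero, neg_smul]
end

section
/- Let $\Phi^V(z): V_{\lambda,\kappa} \to V_{\lambda-m,\kappa}\hat\otimes\mathfrak F_m(z)$ be the intertwiner with $\Phi^V(z)(v_{\lambda,\kappa}) = v^\sharp_{\lambda,\kappa}$. Then $((z h(z))_- \otimes 1)\,\Phi^V(z)(v_{\lambda,\kappa}) = -m\,\Phi^V(z)(v_{\lambda,\kappa})$, where $(zh(z))_- = \sum_{k>0} h_k z^{-k}$. -/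
/- STATEMENT 16: For the intertwiner `Φ^V(z)` with
`Φ^V(z)(v_{λ,κ}) = v♯ = ∑_n ∑_{π∈P_n} α_π h_π v_{λ-m,κ} ⊗ u^m_n`, one has
`((z h(z))_- ⊗ 1) Φ^V(z)(v_{λ,κ}) = -m Φ^V(z)(v_{λ,κ})`, where
`(z h(z))_- = ∑_{k>0} h_k z^{-k}` and only the first tensor factor action is
applied.

Encoding: since `e u^m = 0`, `h u^m = m u^m`, and `z^k` shifts `u^m_n` to
`u^m_{n+k}`, the element `v♯` is recorded by its components
`w n = ∑_{π∈P_n} α_π h_π v ∈ V` (with `w n = 0` for `n < 0`), a partition `π`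
of `n` being encoded by its multiplicity function `c : Fin n → Fin (n+1)`
(the part `k+1` occurring `c k` times), `h_π = ∏_k h_{-(k+1)}^{c k}`, and
`α_π = β_{(c 0, …, c (n-1))}` given by the explicit solution of the recursion.
Applying `h_k ⊗ z^{-k}` (`k > 0`) to `v♯` and matching the `u^m`-components,
the claim reads `h_k (w n) = -m • w (n-k)` componentwise (the vector `v = v_{λ-m,κ}` satisfying
`e_n v = 0`, `h_k v = 0` for `k > 0`, `h_0 v = (λ(h) - m) v`, the Heisenberg
relations `[h_k, h_l] = k κ δ_{k+l,0}` and `[e_a, h_b] = -2 e_{a+b}`). -/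

noncomputable def betaCoef (m : ℕ) (κ β₁ : ℂ) {r : ℕ} (n : Fin r → ℕ) : ℂ :=
  (m : ℂ) ^ (((∑ i, n i : ℕ) : ℤ) - 1) * β₁ /
    ((-κ) ^ (((∑ i, n i : ℕ) : ℤ) - 1) *
      (∏ i : Fin r, ((i : ℕ) + 1 : ℂ) ^ (n i)) *
      ∏ i : Fin r, (Nat.factorial (n i) : ℂ))

/-- `h_π = h_{-1}^{c 0} h_{-2}^{c 1} ⋯ h_{-r}^{c (r-1)}`. -/
noncomputable def hpiOp {V : Type*} [AddCommGroup V] [Module ℂ V]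
    (ham : ℤ → Module.End ℂ V) {r : ℕ} (c : Fin r → ℕ) : Module.End ℂ V :=
  (List.ofFn fun k : Fin r => ham (-((k : ℕ) + 1 : ℤ)) ^ (c k)).prod

/-- The degree-`n` component `w n = ∑_{π∈P_n} α_π h_π v` of the singular
vector `v♯`. -/
noncomputable def wVec {V : Type*} [AddCommGroup V] [Module ℂ V]
    (ham : ℤ → Module.End ℂ V) (v : V) (m : ℕ) (κ β₁ : ℂ) (n : ℤ) : V :=
  if 0 ≤ n then
    ∑ c ∈ Finset.univ.filter
        (fun c : Fin n.toNat → Fin (n.toNat + 1) =>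
          ∑ k : Fin n.toNat, ((k : ℕ) + 1) * (c k : ℕ) = n.toNat),
      betaCoef m κ β₁ (fun k => (c k : ℕ)) • (hpiOp ham (fun k => (c k : ℕ))) v
  else 0


set_option linter.unusedVariables false
set_option linter.unusedSectionVars false
set_option maxHeartbeats 1000000

section aux
variable {V : Type*} [AddCommGroup V] [Module ℂ V]

lemma comm_pow (B A : Module.End ℂ V) (z : ℂ) (h : B * A = A * B + z • 1) :
    ∀ a : ℕ, B * A ^ a = A ^ a * B + ((a : ℂ) * z) • A ^ (a - 1) := by
  intro a
  induction a with
  | zero => simp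
  | succ b ih =>
    rw [pow_succ', ← mul_assoc, h, add_mul, mul_assoc, ih, mul_add, ← mul_assoc,
      ← pow_succ', mul_smul_comm, smul_mul_assoc, one_mul]
    cases b with
    | zero => simp
    | succ t =>
      rw [← pow_succ']
      have : (t + 1).succ - 1 = t + 1 := rfl
      rw [this]
      push_cast
      rw [add_assoc, ← add_smul]
      ring_nf



noncomputable def Pprod (ham : ℤ → Module.End ℂ V) (s r : ℕ) (c : Fin r → ℕ) :
    Module.End ℂ V :=
  (List.ofFn fun k : Fin r => ham (-((s : ℤ) + (k : ℕ) + 1)) ^ (c k)).prod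

lemma Pprod_zero (ham : ℤ → Module.End ℂ V) (s : ℕ) (c : Fin 0 → ℕ) :
    Pprod ham s 0 c = 1 := by simp [Pprod]

lemma Pprod_succ (ham : ℤ → Module.End ℂ V) (s r : ℕ) (c : Fin (r+1) → ℕ) :
    Pprod ham s (r+1) c =
      ham (-((s : ℤ) + 1)) ^ (c 0) *
        Pprod ham (s+1) r (fun j => c j.succ) := by
  rw [Pprod, List.ofFn_succ, List.prod_cons]
  have h0 : -((s:ℤ) + (((0 : Fin (r+1))) : ℕ) + 1) = -((s:ℤ)+1) := by norm_num
  rw [h0]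
  congr 1
  rw [Pprod]
  exact congrArg List.prod (congrArg List.ofFn (funext fun i => by
    congr 2
    push_cast [Fin.val_succ]
    ring))

lemma Pprod_snoc (ham : ℤ → Module.End ℂ V) (s r : ℕ) (c : Fin (r+1) → ℕ) :
    Pprod ham s (r+1) c =
      Pprod ham s r (fun j => c j.castSucc) *
        ham (-((s : ℤ) + r + 1)) ^ (c (Fin.last r)) := by
  rw [Pprod, List.ofFn_succ', List.prod_concat, Pprod]
  congr 2

lemma Pprod_trunc (ham : ℤ → Module.End ℂ V) (s : ℕ) :
    ∀ (r r' : ℕ) (h : r' ≤ r) (c : Fin r → ℕ),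
      (∀ j : Fin r, r' ≤ (j : ℕ) → c j = 0) →
      Pprod ham s r c = Pprod ham s r' (fun j => c (Fin.castLE h j)) := by
  intro r
  induction r with
  | zero => intro r' h c _; interval_cases r'; rfl
  | succ t ih =>
    intro r' h c hc
    rcases Nat.lt_or_ge r' (t+1) with hlt | hge
    · have hle : r' ≤ t := by omega
      rw [Pprod_snoc, hc (Fin.last t) (by simp; omega), pow_zero, mul_one,
        ih r' hle _ (fun j hj => hc j.castSucc (by simpa using hj))]
      exact congrArg (Pprod ham s r') (funext fun j =>
        congrArg c (Fin.ext (by simp)))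
    · have : r' = t + 1 := by omega
      subst this
      congr

variable (ham : ℤ → Module.End ℂ V) (κ : ℂ)
variable (hhh : ∀ k l : ℤ, ⁅ham k, ham l⁆ =
      if k + l = 0 then ((k : ℂ) * κ) • (1 : Module.End ℂ V) else 0)

include hhh in
lemma hamComm {k l : ℤ} (h : k + l ≠ 0) : Commute (ham k) (ham l) := by
  have := hhh k l
  rw [if_neg h, Ring.lie_def, sub_eq_zero] at this
  exact this
end aux

section aux2
variable {V : Type*} [AddCommGroup V] [Module ℂ V]
variable (ham : ℤ → Module.End ℂ V) (κ : ℂ)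
variable (hhh : ∀ k l : ℤ, ⁅ham k, ham l⁆ =
      if k + l = 0 then ((k : ℂ) * κ) • (1 : Module.End ℂ V) else 0)

include hhh in
lemma comm_out (k : ℤ) :
    ∀ (s r : ℕ) (c : Fin r → ℕ), (∀ j : Fin r, (s : ℤ) + j + 1 ≠ k) →
      ham k * Pprod ham s r c = Pprod ham s r c * ham k := by
  intro s r
  induction r generalizing s with
  | zero => intro c _; rw [Pprod_zero, one_mul, mul_one]
  | succ t ih =>
    intro c hout
    rw [Pprod_succ]
    have h0 : Commute (ham k) (ham (-((s:ℤ)+1)) ^ c 0) := by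
      refine (hamComm ham κ hhh ?_).pow_right _
      have := hout 0
      simp only [Fin.val_zero, Nat.cast_zero, add_zero] at this
      omega
    have htail := ih (s+1) (fun j => c j.succ) (fun j => by
      have := hout j.succ
      push_cast [Fin.val_succ] at this ⊢
      omega)
    calc ham k * (ham (-((s:ℤ)+1)) ^ c 0 * Pprod ham (s+1) t fun j => c j.succ)
        = ham (-((s:ℤ)+1)) ^ c 0 * (ham k * Pprod ham (s+1) t fun j => c j.succ) := by
          rw [← mul_assoc, h0.eq, mul_assoc]
      _ = _ := by rw [htail, ← mul_assoc]

include hhh in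
lemma comm_in (k : ℤ) (hk : 0 < k) :
    ∀ (r s : ℕ) (c : Fin r → ℕ) (j : Fin r), (s : ℤ) + j + 1 = k →
      ham k * Pprod ham s r c = Pprod ham s r c * ham k +
        (((c j : ℕ) : ℂ) * ((k : ℂ) * κ)) •
          Pprod ham s r (Function.update c j (c j - 1)) := by
  intro r
  induction r with
  | zero => intro s c j; exact absurd j.pos (by simp)
  | succ t ih =>
    intro s c j hj
    rcases j with ⟨jv, hjv⟩
    cases jv with
    | zero =>
      have hk1 : (s : ℤ) + 1 = k := by
        simpa using hj
      have hBA : ham k * ham (-((s:ℤ)+1)) =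
          ham (-((s:ℤ)+1)) * ham k + ((k:ℂ) * κ) • 1 := by
        have := hhh k (-((s:ℤ)+1))
        rw [if_pos (by omega), Ring.lie_def] at this
        rw [sub_eq_iff_eq_add] at this
        rw [this]; exact add_comm _ _
      have hkA := comm_pow (ham k) (ham (-((s:ℤ)+1))) ((k:ℂ)*κ) hBA (c ⟨0, hjv⟩)
      have hkT := comm_out ham κ hhh k (s+1) t (fun j => c j.succ) (fun j => by
        push_cast [Fin.val_succ]; omega)
      have h00 : (⟨0, hjv⟩ : Fin (t+1)) = 0 := rfl
      rw [Pprod_succ, Pprod_succ]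
      have hupd0 : Function.update c ⟨0, hjv⟩ (c ⟨0, hjv⟩ - 1) 0 = c ⟨0, hjv⟩ - 1 := by
        rw [h00]; exact Function.update_self _ _ _
      have hupdt : (fun i : Fin t => Function.update c ⟨0, hjv⟩ (c ⟨0, hjv⟩ - 1) i.succ)
          = fun i : Fin t => c i.succ := by
        funext i
        exact Function.update_of_ne (by rw [h00]; exact (Fin.succ_ne_zero i)) _ _
      rw [hupd0, hupdt]
      have h0v : c (0 : Fin (t+1)) = c ⟨0, hjv⟩ := by rw [h00]
      rw [h0v]
      calc ham k * (ham (-((s:ℤ)+1)) ^ c ⟨0, hjv⟩ * Pprod ham (s+1) t fun i => c i.succ)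
          = (ham (-((s:ℤ)+1)) ^ c ⟨0, hjv⟩ * ham k
              + (((c ⟨0, hjv⟩ : ℕ):ℂ) * ((k:ℂ)*κ)) • ham (-((s:ℤ)+1)) ^ (c ⟨0, hjv⟩ - 1))
              * Pprod ham (s+1) t (fun i => c i.succ) := by
            rw [← mul_assoc, hkA]
        _ = _ := by
            rw [add_mul, mul_assoc, hkT, ← mul_assoc, smul_mul_assoc]
    | succ n =>
      have hn : n < t := by omega
      have hk2 : ((s:ℤ)+1) + (n : ℕ) + 1 = k := by
        push_cast at hj ⊢
        omega
      have h0c : Commute (ham k) (ham (-((s:ℤ)+1)) ^ c 0) := by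
        refine (hamComm ham κ hhh ?_).pow_right _
        omega
      have hsucc : (⟨n, hn⟩ : Fin t).succ = ⟨n+1, hjv⟩ := rfl
      have ihap := ih (s+1) (fun i => c i.succ) ⟨n, hn⟩ (by exact_mod_cast hk2)
      have hupdt : (fun i : Fin t => Function.update c ⟨n+1, hjv⟩ (c ⟨n+1, hjv⟩ - 1) i.succ)
          = Function.update (fun i : Fin t => c i.succ) ⟨n, hn⟩ (c ⟨n+1, hjv⟩ - 1) := by
        funext i
        rcases eq_or_ne i ⟨n, hn⟩ with h | h
        · subst h
          rw [hsucc, Function.update_self, Function.update_self]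
        · rw [Function.update_of_ne (by rw [← hsucc]; exact fun hh => h (Fin.succ_injective _ hh)) _ _,
            Function.update_of_ne h]
      have hupd0 : Function.update c ⟨n+1, hjv⟩ (c ⟨n+1, hjv⟩ - 1) 0 = c 0 :=
        Function.update_of_ne (by simp [Fin.ext_iff]) _ _
      rw [Pprod_succ, Pprod_succ, hupd0, hupdt]
      calc ham k * (ham (-((s:ℤ)+1)) ^ c 0 * Pprod ham (s+1) t fun i => c i.succ)
          = ham (-((s:ℤ)+1)) ^ c 0 * (ham k * Pprod ham (s+1) t fun i => c i.succ) := by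
            rw [← mul_assoc, h0c.eq, mul_assoc]
        _ = _ := by
            rw [ihap, mul_add, ← mul_assoc, mul_smul_comm]
            simp [hsucc]
end aux2

open Finset

def extN (N : ℕ) (c : Fin N → Fin (N+1)) : ℕ → ℕ :=
  fun i => if h : i < N then (c ⟨i, h⟩ : ℕ) else 0

lemma extN_zero (N : ℕ) (c : Fin N → Fin (N+1)) {i : ℕ} (h : N ≤ i) :
    extN N c i = 0 := by
  simp [extN, Nat.not_lt.2 h]

lemma extN_le (N : ℕ) (c : Fin N → Fin (N+1)) (i : ℕ) : extN N c i ≤ N := by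
  unfold extN
  split
  · exact Nat.lt_succ_iff.1 (Fin.is_lt _)
  · exact Nat.zero_le _

lemma sum_prod_trunc {M : Type*} [CommMonoid M] (f : ℕ → M) {N' N : ℕ} (h : N' ≤ N)
    (hf : ∀ i, N' ≤ i → f i = 1) :
    ∏ i ∈ range N, f i = ∏ i ∈ range N', f i :=
  (Finset.prod_subset (Finset.range_subset_range.2 h) (fun x _ hx' =>
    hf x (by simpa using hx'))).symm

lemma sum_range_trunc {M : Type*} [AddCommMonoid M] (f : ℕ → M) {N' N : ℕ} (h : N' ≤ N)
    (hf : ∀ i, N' ≤ i → f i = 0) :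
    ∑ i ∈ range N, f i = ∑ i ∈ range N', f i :=
  (Finset.sum_subset (Finset.range_subset_range.2 h) (fun x _ hx' =>
    hf x (by simpa using hx'))).symm

lemma weight_fin_eq_range (N : ℕ) (c : Fin N → Fin (N+1)) :
    ∑ k : Fin N, ((k : ℕ) + 1) * (c k : ℕ) = ∑ i ∈ range N, (i+1) * extN N c i := by
  rw [← Fin.sum_univ_eq_sum_range (fun i => (i+1) * extN N c i) N]
  exact Finset.sum_congr rfl fun i _ => by simp [extN, Nat.mul_comm]

lemma two_terms_le (f : ℕ → ℕ) {N i j : ℕ} (hi : i < N) (hj : j < N) (hij : i ≠ j) :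
    f i + f j ≤ ∑ x ∈ range N, f x := by
  have hsub : ({i, j} : Finset ℕ) ⊆ range N := by
    intro x hx
    simp only [Finset.mem_insert, Finset.mem_singleton] at hx
    rcases hx with rfl | rfl <;> simp [hi, hj]
  have := Finset.sum_le_sum_of_subset hsub (f := f)
  rwa [Finset.sum_pair hij] at this

section facts
variable {N K : ℕ} (hK1 : 1 ≤ K) (hKN : K ≤ N) (E : ℕ → ℕ)
  (hE0 : ∀ i, N ≤ i → E i = 0)
  (hw : ∑ i ∈ range N, (i+1) * E i = N)
  (hnz : E (K-1) ≠ 0)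

def dof (K : ℕ) (E : ℕ → ℕ) : ℕ → ℕ := fun i => E i - (if i = K-1 then 1 else 0)

include hK1 hKN hw hnz in
lemma single_bound : K * E (K-1) ≤ N := by
  have h1 : (K-1) ∈ range N := by simp; omega
  have := Finset.single_le_sum (f := fun i => (i+1) * E i)
    (fun i _ => Nat.zero_le _) h1
  rw [hw] at this
  have h2 : K - 1 + 1 = K := by omega
  rwa [h2] at this

include hK1 hKN hw hnz in
lemma pair_bound {i : ℕ} (hi : i < N) (hij : i ≠ K - 1) :
    (i+1) * E i + K * E (K-1) ≤ N := by
  have h2 : K - 1 + 1 = K := by omega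
  have := two_terms_le (fun i => (i+1) * E i) hi (show K-1 < N by omega) hij
  rw [hw, h2] at this
  exact this

include hK1 hKN hw hnz hE0 in
lemma dof_vanish : ∀ i, N - K ≤ i → dof K E i = 0 := by
  intro i hi
  unfold dof
  rcases Nat.lt_or_ge i N with hiN | hiN
  · rcases eq_or_ne i (K-1) with rfl | hij
    · rw [if_pos rfl]
      have h1 := single_bound hK1 hKN E hw hnz
      rcases Nat.lt_or_ge (E (K-1)) 2 with h | h
      · omega
      · exfalso
        have : K * 2 ≤ K * E (K-1) := Nat.mul_le_mul_left _ h
        omega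
    · rcases Nat.eq_zero_or_pos (E i) with h | h
      · simp [h]
      · exfalso
        have hp := pair_bound hK1 hKN E hw hnz hiN hij
        have h3 : i + 1 ≤ (i+1) * E i := Nat.le_mul_of_pos_right _ h
        have h4 : K ≤ K * E (K-1) := Nat.le_mul_of_pos_right _ (Nat.pos_of_ne_zero hnz)
        omega
  · simp [hE0 i hiN]

include hK1 hKN hw hnz hE0 in
lemma dof_bound : ∀ i, dof K E i ≤ N - K := by
  intro i
  rcases Nat.lt_or_ge i (N - K) with hi | hi
  · unfold dof
    rcases eq_or_ne i (K-1) with rfl | hij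
    · rw [if_pos rfl]
      have h1 := single_bound hK1 hKN E hw hnz
      obtain ⟨e, he⟩ := Nat.exists_eq_succ_of_ne_zero hnz
      rw [he]
      rw [he, Nat.mul_succ] at h1
      have h5 : e ≤ K * e := Nat.le_mul_of_pos_left e hK1
      omega
    · rcases Nat.eq_zero_or_pos (E i) with h | h
      · simp [h]
      · have hp := pair_bound hK1 hKN E hw hnz (by omega) hij
        have h3 : E i ≤ (i+1) * E i := Nat.le_mul_of_pos_left _ (by omega)
        have h4 : K ≤ K * E (K-1) := Nat.le_mul_of_pos_right _ (Nat.pos_of_ne_zero hnz)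
        omega
  · rw [dof_vanish hK1 hKN E hE0 hw hnz i hi]
    exact Nat.zero_le _

include hnz in
lemma E_eq_dof : ∀ i, E i = dof K E i + (if i = K-1 then 1 else 0) := by
  intro i
  unfold dof
  rcases eq_or_ne i (K-1) with rfl | hij
  · rw [if_pos rfl]
    omega
  · simp [hij]

include hK1 hKN hw hnz hE0 in
lemma dof_weight : ∑ i ∈ range (N - K), (i+1) * dof K E i = N - K := by
  have hsplit : ∑ i ∈ range N, (i+1) * E i
      = ∑ i ∈ range N, (i+1) * dof K E i
        + ∑ i ∈ range N, (if i = K-1 then i+1 else 0) := by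
    rw [← Finset.sum_add_distrib]
    refine Finset.sum_congr rfl fun i _ => ?_
    rw [E_eq_dof E hnz i, Nat.mul_add]
    congr 1
    split <;> simp
  have h2 : ∑ i ∈ range N, (if i = K-1 then i+1 else 0) = K := by
    rw [Finset.sum_ite_eq' (range N) (K-1) (fun i => i+1)]
    rw [if_pos (by simp; omega)]
    omega
  have h3 : ∑ i ∈ range N, (i+1) * dof K E i = ∑ i ∈ range (N-K), (i+1) * dof K E i :=
    sum_range_trunc (fun i => (i+1) * dof K E i) (show N - K ≤ N by omega)
    (fun i hi => show (i+1) * dof K E i = 0 by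
      rw [dof_vanish hK1 hKN E hE0 hw hnz i hi, Nat.mul_zero])
  omega

include hK1 hKN hw hnz hE0 in
lemma dof_count : ∑ i ∈ range N, E i = (∑ i ∈ range (N-K), dof K E i) + 1 := by
  have hsplit : ∑ i ∈ range N, E i
      = ∑ i ∈ range N, dof K E i + ∑ i ∈ range N, (if i = K-1 then 1 else 0) := by
    rw [← Finset.sum_add_distrib]
    exact Finset.sum_congr rfl fun i _ => E_eq_dof E hnz i
  have h2 : ∑ i ∈ range N, (if i = K-1 then 1 else 0) = 1 := by
    rw [Finset.sum_ite_eq' (range N) (K-1) (fun _ => 1), if_pos (by simp; omega)]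
  have h3 : ∑ i ∈ range N, dof K E i = ∑ i ∈ range (N-K), dof K E i :=
    sum_range_trunc (fun i => dof K E i) (show N - K ≤ N by omega)
    (fun i hi => show dof K E i = 0 from dof_vanish hK1 hKN E hE0 hw hnz i hi)
  omega

include hK1 hKN hw hnz hE0 in
lemma dof_prod1 :
    ∏ i ∈ range N, ((i:ℂ) + 1) ^ (E i)
      = (K : ℂ) * ∏ i ∈ range (N-K), ((i:ℂ) + 1) ^ (dof K E i) := by
  have hsplit : ∏ i ∈ range N, ((i:ℂ) + 1) ^ (E i)
      = (∏ i ∈ range N, ((i:ℂ) + 1) ^ (dof K E i))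
        * ∏ i ∈ range N, (if i = K-1 then ((i:ℂ)+1) else 1) := by
    rw [← Finset.prod_mul_distrib]
    refine Finset.prod_congr rfl fun i _ => ?_
    rw [E_eq_dof E hnz i, pow_add]
    congr 1
    split <;> simp
  have h2 : ∏ i ∈ range N, (if i = K-1 then ((i:ℂ)+1) else 1) = (K : ℂ) := by
    rw [Finset.prod_ite_eq' (range N) (K-1) (fun i => ((i:ℂ)+1)), if_pos (by simp; omega)]
    have : ((K - 1 : ℕ) : ℂ) = (K : ℂ) - 1 := by
      push_cast [Nat.cast_sub hK1]; ring
    rw [this]; ring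
  have h3 : ∏ i ∈ range N, ((i:ℂ) + 1) ^ (dof K E i)
      = ∏ i ∈ range (N-K), ((i:ℂ) + 1) ^ (dof K E i) :=
    sum_prod_trunc (fun i => ((i:ℂ) + 1) ^ (dof K E i)) (show N - K ≤ N by omega)
    (fun i hi => show ((i:ℂ)+1) ^ (dof K E i) = 1 by
      rw [dof_vanish hK1 hKN E hE0 hw hnz i hi, pow_zero])
  rw [hsplit, h2, h3]
  ring

include hK1 hKN hw hnz hE0 in
lemma dof_prod2 :
    ∏ i ∈ range N, ((E i).factorial : ℂ)
      = (E (K-1) : ℂ) * ∏ i ∈ range (N-K), ((dof K E i).factorial : ℂ) := by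
  have hsplit : ∏ i ∈ range N, ((E i).factorial : ℂ)
      = (∏ i ∈ range N, ((dof K E i).factorial : ℂ))
        * ∏ i ∈ range N, (if i = K-1 then (E (K-1) : ℂ) else 1) := by
    rw [← Finset.prod_mul_distrib]
    refine Finset.prod_congr rfl fun i _ => ?_
    rcases eq_or_ne i (K-1) with rfl | hij
    · simp only [if_pos rfl]
      have he : E (K-1) = dof K E (K-1) + 1 := by
        rw [E_eq_dof E hnz (K-1)]; simp
      rw [he, Nat.factorial_succ]
      push_cast
      ring
    · have : dof K E i = E i := by unfold dof; simp [hij]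
      rw [this, if_neg hij, mul_one]
  have h2 : ∏ i ∈ range N, (if i = K-1 then (E (K-1) : ℂ) else 1) = (E (K-1) : ℂ) := by
    rw [Finset.prod_ite_eq' (range N) (K-1) (fun _ => (E (K-1) : ℂ)), if_pos (by simp; omega)]
  have h3 : ∏ i ∈ range N, ((dof K E i).factorial : ℂ)
      = ∏ i ∈ range (N-K), ((dof K E i).factorial : ℂ) :=
    sum_prod_trunc (fun i => ((dof K E i).factorial : ℂ)) (show N - K ≤ N by omega)
    (fun i hi => show ((dof K E i).factorial : ℂ) = 1 by
      rw [dof_vanish hK1 hKN E hE0 hw hnz i hi]; simp)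
  rw [hsplit, h2, h3]
  ring
end facts

lemma coeff_id (m K x : ℕ) (hm : 0 < m) (hK : 0 < K) (hx : 0 < x) (κ β₁ : ℂ) (hκ : κ ≠ 0)
    {N N' : ℕ} (cb : Fin N → ℕ) (cb' : Fin N' → ℕ)
    (hS : ∑ i, cb i = (∑ i, cb' i) + 1)
    (hP1 : ∏ i : Fin N, ((i : ℕ) + 1 : ℂ) ^ (cb i)
      = (K : ℂ) * ∏ i : Fin N', ((i : ℕ) + 1 : ℂ) ^ (cb' i))
    (hP2 : ∏ i : Fin N, ((cb i).factorial : ℂ)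
      = (x : ℂ) * ∏ i : Fin N', ((cb' i).factorial : ℂ)) :
    betaCoef m κ β₁ cb * ((x : ℂ) * ((K : ℂ) * κ)) = -(m : ℂ) * betaCoef m κ β₁ cb' := by
  unfold betaCoef
  rw [hS, hP1, hP2]
  have h1 : ((∑ i, cb' i) + 1 : ℕ) = ((∑ i, cb' i : ℕ) : ℤ) + 1 - 1 + 1 := by push_cast; ring
  have hm' : (m : ℂ) ≠ 0 := Nat.cast_ne_zero.2 hm.ne'
  have hκ' : (-κ) ≠ 0 := neg_ne_zero.2 hκ
  have hKc : (K : ℂ) ≠ 0 := Nat.cast_ne_zero.2 hK.ne'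
  have hxc : (x : ℂ) ≠ 0 := Nat.cast_ne_zero.2 hx.ne'
  have hp1 : (∏ i : Fin N', ((i : ℕ) + 1 : ℂ) ^ (cb' i)) ≠ 0 :=
    Finset.prod_ne_zero_iff.2 fun i _ => pow_ne_zero _ (Nat.cast_add_one_ne_zero _)
  have hp2 : (∏ i : Fin N', ((cb' i).factorial : ℂ)) ≠ 0 :=
    Finset.prod_ne_zero_iff.2 fun i _ => Nat.cast_ne_zero.2 (Nat.factorial_ne_zero _)
  have e1 : (((∑ i, cb' i) + 1 : ℕ) : ℤ) - 1 = ((∑ i, cb' i : ℕ) : ℤ) := by push_cast; ring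
  rw [e1]
  set S : ℤ := ((∑ i, cb' i : ℕ) : ℤ) with hSdef
  rw [zpow_sub_one₀ hm' S, zpow_sub_one₀ hκ' S]
  have hz1 : (m : ℂ) ^ S ≠ 0 := zpow_ne_zero _ hm'
  have hz2 : (-κ) ^ S ≠ 0 := zpow_ne_zero _ hκ'
  field_simp


lemma hpiOp_eq {V : Type*} [AddCommGroup V] [Module ℂ V]
    (ham : ℤ → Module.End ℂ V) {r : ℕ} (c : Fin r → ℕ) :
    hpiOp ham c = Pprod ham 0 r c := by
  unfold hpiOp Pprod
  exact congrArg List.prod (congrArg List.ofFn (funext fun i => by norm_num))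

section bijsec
open Finset
variable {N K : ℕ}

def phiF (N K : ℕ) (c : Fin N → Fin (N+1)) : Fin (N-K) → Fin (N-K+1) :=
  fun j => ⟨min (dof K (extN N c) (j : ℕ)) (N-K), Nat.lt_succ_of_le (min_le_right _ _)⟩

def psiF (N K : ℕ) (c' : Fin (N-K) → Fin (N-K+1)) : Fin N → Fin (N+1) :=
  fun j => ⟨min (extN (N-K) c' (j : ℕ) + (if (j : ℕ) = K-1 then 1 else 0)) N,
    Nat.lt_succ_of_le (min_le_right _ _)⟩

lemma extN_coe (c : Fin N → Fin (N+1)) (j : Fin N) : extN N c (j : ℕ) = (c j : ℕ) := by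
  simp [extN]

variable (hK1 : 1 ≤ K) (hKN : K ≤ N)

include hK1 hKN in
lemma phiF_val (c : Fin N → Fin (N+1))
    (hw : ∑ i ∈ range N, (i+1) * extN N c i = N) (hnz : extN N c (K-1) ≠ 0)
    (j : Fin (N-K)) : (phiF N K c j : ℕ) = dof K (extN N c) (j : ℕ) :=
  min_eq_left (dof_bound hK1 hKN (extN N c) (fun i hi => extN_zero N c hi) hw hnz _)

include hK1 hKN in
lemma psiF_val (c' : Fin (N-K) → Fin (N-K+1)) (j : Fin N) :
    (psiF N K c' j : ℕ) = extN (N-K) c' (j : ℕ) + (if (j : ℕ) = K-1 then 1 else 0) := by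
  refine min_eq_left ?_
  have h1 := extN_le (N-K) c' (j : ℕ)
  split <;> omega

include hK1 hKN in
lemma extN_phiF (c : Fin N → Fin (N+1))
    (hw : ∑ i ∈ range N, (i+1) * extN N c i = N) (hnz : extN N c (K-1) ≠ 0)
    (i : ℕ) : extN (N-K) (phiF N K c) i = if i < N - K then dof K (extN N c) i else 0 := by
  by_cases h : i < N - K
  · have h2 : extN (N-K) (phiF N K c) i = (phiF N K c ⟨i, h⟩ : ℕ) := by simp [extN, h]
    rw [h2, if_pos h]
    exact phiF_val hK1 hKN c hw hnz ⟨i, h⟩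
  · rw [if_neg h]
    exact extN_zero _ _ (by omega)

include hK1 hKN in
lemma extN_psiF (c' : Fin (N-K) → Fin (N-K+1)) (i : ℕ) (hi : i < N) :
    extN N (psiF N K c') i = extN (N-K) c' i + (if i = K-1 then 1 else 0) := by
  have : extN N (psiF N K c') i = (psiF N K c' ⟨i, hi⟩ : ℕ) := by simp [extN, hi]
  rw [this, psiF_val hK1 hKN]

include hK1 hKN in
lemma psiF_weight (c' : Fin (N-K) → Fin (N-K+1))
    (hw' : ∑ i ∈ range (N-K), (i+1) * extN (N-K) c' i = N - K) :
    ∑ i ∈ range N, (i+1) * extN N (psiF N K c') i = N := by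
  have h1 : ∀ i ∈ range N, (i+1) * extN N (psiF N K c') i
      = (i+1) * extN (N-K) c' i + (if i = K-1 then i+1 else 0) := by
    intro i hi
    rw [extN_psiF hK1 hKN c' i (mem_range.1 hi), Nat.mul_add]
    congr 1
    split <;> simp
  rw [Finset.sum_congr rfl h1, Finset.sum_add_distrib]
  have h2 : ∑ i ∈ range N, (if i = K-1 then i+1 else 0) = K := by
    rw [Finset.sum_ite_eq' (range N) (K-1) (fun i => i+1), if_pos (by simp; omega)]
    omega
  have h3 : ∑ i ∈ range N, (i+1) * extN (N-K) c' i
      = ∑ i ∈ range (N-K), (i+1) * extN (N-K) c' i :=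
    sum_range_trunc _ (by omega) (fun i hi => by
      rw [extN_zero (N-K) c' hi, Nat.mul_zero])
  rw [h2, h3, hw']
  omega

include hK1 hKN in
lemma psiF_phiF (c : Fin N → Fin (N+1))
    (hw : ∑ i ∈ range N, (i+1) * extN N c i = N) (hnz : extN N c (K-1) ≠ 0) :
    psiF N K (phiF N K c) = c := by
  have hE0 : ∀ i, N ≤ i → extN N c i = 0 := fun i hi => extN_zero N c hi
  funext j
  apply Fin.ext
  rw [psiF_val hK1 hKN, extN_phiF hK1 hKN c hw hnz]
  rw [← extN_coe c j]
  rcases Nat.lt_or_ge (j : ℕ) (N-K) with h | h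
  · rw [if_pos h, ← E_eq_dof (extN N c) hnz (j : ℕ)]
  · rw [if_neg (Nat.not_lt.2 h)]
    have hv := dof_vanish hK1 hKN (extN N c) hE0 hw hnz (j : ℕ) h
    unfold dof at hv
    rcases eq_or_ne ((j : ℕ)) (K-1) with he | he
    · rw [if_pos he]
      rw [if_pos he] at hv
      have := Nat.pos_of_ne_zero (he ▸ hnz)
      omega
    · rw [if_neg he]
      rw [if_neg he] at hv
      omega

include hK1 hKN in
lemma phiF_psiF (c' : Fin (N-K) → Fin (N-K+1)) :
    phiF N K (psiF N K c') = c' := by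
  funext j
  apply Fin.ext
  have hjlt : (j : ℕ) < N - K := j.isLt
  have hjN : (j : ℕ) < N := by omega
  have h1 : dof K (extN N (psiF N K c')) (j : ℕ) = extN (N-K) c' (j : ℕ) := by
    unfold dof
    rw [extN_psiF hK1 hKN c' _ hjN]
    split <;> omega
  have h2 : (phiF N K (psiF N K c') j : ℕ)
      = min (dof K (extN N (psiF N K c')) (j : ℕ)) (N-K) := rfl
  rw [h2, h1, ← extN_coe c' j]
  exact min_eq_left (extN_le _ _ _)

end bijsec

theorem stmt16 {V : Type*} [AddCommGroup V] [Module ℂ V]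
    (ham eop : ℤ → Module.End ℂ V) (v : V) (m : ℕ) (hm : 0 < m)
    (κ lamh β₁ : ℂ) (hκ : κ ≠ 0)
    (hhh : ∀ k l : ℤ, ⁅ham k, ham l⁆ =
      if k + l = 0 then ((k : ℂ) * κ) • (1 : Module.End ℂ V) else 0)
    (heh : ∀ a b : ℤ, ⁅eop a, ham b⁆ = (-2 : ℤ) • eop (a + b))
    (hev : ∀ a : ℤ, eop a v = 0)
    (hhv : ∀ k : ℤ, 0 < k → ham k v = 0)
    (hh0 : ham 0 v = (lamh - m) • v) :
    ∀ k : ℤ, 0 < k → ∀ n : ℤ,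
      ham k (wVec ham v m κ β₁ n) = (-(m : ℂ)) • wVec ham v m κ β₁ (n - k) := by
  intro k hk n
  by_cases hn : 0 ≤ n
  case neg =>
    simp only [wVec]
    rw [if_neg hn, if_neg (by omega : ¬ (0:ℤ) ≤ n - k), map_zero, smul_zero]
  simp only [wVec]
  rw [if_pos hn]
  set N := n.toNat with hNdef
  set K := k.toNat with hKdef
  have hNn : (N : ℤ) = n := Int.toNat_of_nonneg hn
  have hKk : (K : ℤ) = k := Int.toNat_of_nonneg hk.le
  have hK1 : 1 ≤ K := by omega
  rw [map_sum]
  by_cases hnk : 0 ≤ n - k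
  case neg =>
    rw [if_neg hnk, smul_zero]
    refine Finset.sum_eq_zero fun c hc => ?_
    rw [map_smul, hpiOp_eq]
    have hcom := comm_out ham κ hhh k 0 N (fun i => (c i : ℕ)) (fun j => by
      have hj := j.isLt
      simp only [Nat.cast_zero]
      omega)
    have happ := congrArg (fun T : Module.End ℂ V => T v) hcom
    simp only [Module.End.mul_apply] at happ
    rw [happ, hhv k hk, map_zero, smul_zero]
  case pos =>
    have hKN : K ≤ N := by omega
    rw [if_pos hnk]
    have hNK : (n - k).toNat = N - K := by omega
    rw [hNK, Finset.smul_sum]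
    have hj0lt : K - 1 < N := by omega
    set j0 : Fin N := ⟨K-1, hj0lt⟩ with hj0
    have hKC : ((K : ℕ) : ℂ) = ((k : ℤ) : ℂ) := by
      rw [← hKk]; norm_cast
    -- per-term rewrite of LHS
    have hstep : ∀ c : Fin N → Fin (N+1),
        c ∈ Finset.univ.filter
          (fun c : Fin N → Fin (N+1) => ∑ i : Fin N, ((i:ℕ)+1) * (c i : ℕ) = N) →
        ham k (betaCoef m κ β₁ (fun i => (c i : ℕ)) • hpiOp ham (fun i => (c i : ℕ)) v)
        = (betaCoef m κ β₁ (fun i => (c i : ℕ)) * (((c j0 : ℕ) : ℂ) * ((k:ℂ) * κ))) •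
            Pprod ham 0 N
              (Function.update (fun i => (c i : ℕ)) j0 ((c j0 : ℕ) - 1)) v := by
      intro c hc
      rw [map_smul, hpiOp_eq]
      have hcomm := comm_in ham κ hhh k hk N 0 (fun i => (c i : ℕ)) j0 (by
        simp only [hj0, Nat.cast_zero]
        push_cast
        omega)
      have happ := congrArg (fun T : Module.End ℂ V => T v) hcomm
      simp only [Module.End.mul_apply, LinearMap.add_apply, LinearMap.smul_apply] at happ
      rw [happ, hhv k hk, map_zero, zero_add, smul_smul]
    rw [Finset.sum_congr rfl hstep]
    rw [Finset.sum_congr rfl (fun c' _ => by rw [hpiOp_eq, smul_smul] :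
      ∀ c' ∈ Finset.univ.filter
        (fun c' : Fin (N-K) → Fin (N-K+1) =>
          ∑ i : Fin (N-K), ((i:ℕ)+1) * (c' i : ℕ) = N-K),
        (-(m:ℂ)) • (betaCoef m κ β₁ (fun i => (c' i : ℕ)) •
            hpiOp ham (fun i => (c' i : ℕ)) v)
        = (-(m:ℂ) * betaCoef m κ β₁ (fun i => (c' i : ℕ))) •
            Pprod ham 0 (N-K) (fun i => (c' i : ℕ)) v)]
    rw [← Finset.sum_filter_of_ne (p := fun c : Fin N → Fin (N+1) => (c j0 : ℕ) ≠ 0)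
      (fun c _ hne h0 => by
        apply hne
        rw [h0]
        simp)]
    refine Finset.sum_bij' (fun c _ => phiF N K c) (fun c' _ => psiF N K c')
      ?_ ?_ ?_ ?_ ?_
    · -- phiF membership
      intro c hc
      simp only [Finset.mem_filter, Finset.mem_univ, true_and] at hc ⊢
      obtain ⟨hwf, hnzf⟩ := hc
      have hw : ∑ i ∈ Finset.range N, (i+1) * extN N c i = N := by
        rw [← weight_fin_eq_range]; exact hwf
      have hnz : extN N c (K-1) ≠ 0 := by
        rw [show (K-1) = ((j0 : ℕ)) from rfl, extN_coe]; exact hnzf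
      rw [weight_fin_eq_range]
      have h1 : ∀ i ∈ Finset.range (N-K),
          (i+1) * extN (N-K) (phiF N K c) i = (i+1) * dof K (extN N c) i := by
        intro i hi
        rw [extN_phiF hK1 hKN c hw hnz i, if_pos (Finset.mem_range.1 hi)]
      rw [Finset.sum_congr rfl h1]
      exact dof_weight hK1 hKN (extN N c) (fun i hi => extN_zero N c hi) hw hnz
    · -- psiF membership
      intro c' hc'
      simp only [Finset.mem_filter, Finset.mem_univ, true_and] at hc' ⊢
      have hw' : ∑ i ∈ Finset.range (N-K), (i+1) * extN (N-K) c' i = N-K := by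
        rw [← weight_fin_eq_range]; exact hc'
      constructor
      · rw [weight_fin_eq_range]
        exact psiF_weight hK1 hKN c' hw'
      · rw [psiF_val hK1 hKN c' j0]
        simp [hj0]
    · -- left inverse
      intro c hc
      simp only [Finset.mem_filter, Finset.mem_univ, true_and] at hc
      obtain ⟨hwf, hnzf⟩ := hc
      have hw : ∑ i ∈ Finset.range N, (i+1) * extN N c i = N := by
        rw [← weight_fin_eq_range]; exact hwf
      have hnz : extN N c (K-1) ≠ 0 := by
        rw [show (K-1) = ((j0 : ℕ)) from rfl, extN_coe]; exact hnzf
      exact psiF_phiF hK1 hKN c hw hnz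
    · -- right inverse
      intro c' hc'
      exact phiF_psiF hK1 hKN c'
    · -- summand equality
      intro c hc
      simp only [Finset.mem_filter, Finset.mem_univ, true_and] at hc
      obtain ⟨hwf, hnzf⟩ := hc
      have hw : ∑ i ∈ Finset.range N, (i+1) * extN N c i = N := by
        rw [← weight_fin_eq_range]; exact hwf
      have hnz : extN N c (K-1) ≠ 0 := by
        rw [show (K-1) = ((j0 : ℕ)) from rfl, extN_coe]; exact hnzf
      have hE0 : ∀ i, N ≤ i → extN N c i = 0 := fun i hi => extN_zero N c hi
      -- operator part
      have hupd : Function.update (fun i : Fin N => (c i : ℕ)) j0 ((c j0 : ℕ) - 1)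
          = fun j : Fin N => dof K (extN N c) (j : ℕ) := by
        funext j
        rcases eq_or_ne j j0 with rfl | hne
        · rw [Function.update_self]
          unfold dof
          rw [show ((j0 : Fin N) : ℕ) = K - 1 from rfl, if_pos rfl]
          simp [extN, hj0lt]
          rfl
        · rw [Function.update_of_ne hne]
          unfold dof
          have : ((j : ℕ)) ≠ K - 1 := by
            intro h
            exact hne (Fin.ext h)
          rw [if_neg this, extN_coe]
          omega
      have hop : Pprod ham 0 N (Function.update (fun i : Fin N => (c i : ℕ)) j0
            ((c j0 : ℕ) - 1))
          = Pprod ham 0 (N-K) (fun i => (phiF N K c i : ℕ)) := by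
        rw [hupd]
        rw [Pprod_trunc ham 0 N (N-K) (by omega) _ (fun j hj =>
          dof_vanish hK1 hKN (extN N c) hE0 hw hnz (j : ℕ) hj)]
        exact congrArg (Pprod ham 0 (N-K)) (funext fun j => by
          rw [phiF_val hK1 hKN c hw hnz j]
          rfl)
      -- coefficient part
      have hS : ∑ i : Fin N, ((fun i => (c i : ℕ)) i)
          = (∑ i : Fin (N-K), ((fun i => (phiF N K c i : ℕ)) i)) + 1 := by
        have e1 : ∑ i : Fin N, (c i : ℕ) = ∑ i ∈ Finset.range N, extN N c i := by
          rw [← Fin.sum_univ_eq_sum_range (fun i => extN N c i) N]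
          exact Finset.sum_congr rfl fun i _ => (extN_coe c i).symm
        have e2 : ∑ i : Fin (N-K), (phiF N K c i : ℕ)
            = ∑ i ∈ Finset.range (N-K), dof K (extN N c) i := by
          rw [← Fin.sum_univ_eq_sum_range (fun i => dof K (extN N c) i) (N-K)]
          exact Finset.sum_congr rfl fun i _ => phiF_val hK1 hKN c hw hnz i
        simp only []
        rw [e1, e2]
        exact dof_count hK1 hKN (extN N c) hE0 hw hnz
      have hP1 : ∏ i : Fin N, ((i : ℕ) + 1 : ℂ) ^ ((fun i => (c i : ℕ)) i)
          = (K : ℂ) * ∏ i : Fin (N-K), ((i : ℕ) + 1 : ℂ) ^ ((fun i => (phiF N K c i : ℕ)) i) := by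
        have e1 : ∏ i : Fin N, ((i : ℕ) + 1 : ℂ) ^ ((c i : ℕ))
            = ∏ i ∈ Finset.range N, ((i:ℂ) + 1) ^ (extN N c i) := by
          rw [← Fin.prod_univ_eq_prod_range (fun i => ((i:ℂ) + 1) ^ (extN N c i)) N]
          exact Finset.prod_congr rfl fun i _ => by rw [extN_coe]
        have e2 : ∏ i : Fin (N-K), ((i : ℕ) + 1 : ℂ) ^ ((phiF N K c i : ℕ))
            = ∏ i ∈ Finset.range (N-K), ((i:ℂ) + 1) ^ (dof K (extN N c) i) := by
          rw [← Fin.prod_univ_eq_prod_range (fun i => ((i:ℂ) + 1) ^ (dof K (extN N c) i)) (N-K)]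
          exact Finset.prod_congr rfl fun i _ => by
            rw [phiF_val hK1 hKN c hw hnz i]
        simp only []
        rw [e1, e2]
        exact dof_prod1 hK1 hKN (extN N c) hE0 hw hnz
      have hP2 : ∏ i : Fin N, (((fun i => (c i : ℕ)) i).factorial : ℂ)
          = ((c j0 : ℕ) : ℂ) * ∏ i : Fin (N-K), (((fun i => (phiF N K c i : ℕ)) i).factorial : ℂ) := by
        have e1 : ∏ i : Fin N, (((c i : ℕ)).factorial : ℂ)
            = ∏ i ∈ Finset.range N, ((extN N c i).factorial : ℂ) := by
          rw [← Fin.prod_univ_eq_prod_range (fun i => ((extN N c i).factorial : ℂ)) N]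
          exact Finset.prod_congr rfl fun i _ => by rw [extN_coe]
        have e2 : ∏ i : Fin (N-K), (((phiF N K c i : ℕ)).factorial : ℂ)
            = ∏ i ∈ Finset.range (N-K), ((dof K (extN N c) i).factorial : ℂ) := by
          rw [← Fin.prod_univ_eq_prod_range (fun i => ((dof K (extN N c) i).factorial : ℂ)) (N-K)]
          exact Finset.prod_congr rfl fun i _ => by
            rw [phiF_val hK1 hKN c hw hnz i]
        simp only []
        rw [e1, e2]
        have := dof_prod2 hK1 hKN (extN N c) hE0 hw hnz
        rw [this]
        congr 2
        rw [show (K-1) = ((j0 : ℕ)) from rfl, extN_coe]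
      have hcoeff := coeff_id m K (c j0 : ℕ) hm (by omega) (Nat.pos_of_ne_zero hnzf)
        κ β₁ hκ (fun i => (c i : ℕ)) (fun i => (phiF N K c i : ℕ)) hS hP1 hP2
      rw [hop, ← hKC, hcoeff]
end
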